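/- arXiv:2305.13461 — 3 statements merged into one kernel-verified Lean document; each statement's English description precedes it below -/
import Mathlib

section
/- Let $t$ be a positive integer and let $\Omega \subseteq \mathbb{C}$ be an open neighborhood of the origin. Then there is no function $f$ analytic on $\Omega$, not agreeing on any neighborhood of $0$ with a quotient of two polynomials with complex coefficients, whose Taylor coefficients $a_k$ at $0$ are rational for all $0 \le k \le t$, which maps $\mathbb{Q} \cap \Omega$ into $\mathbb{Q}$, and for which there exists a constant $C > 0$ and an integer $q_0$ such that $\operatorname{den} f(p/q) \le C\, q^{t/2}$ for all rational numbers $p/q \in \Omega$ in lowest terms with $q \ge q_0$. -/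
set_option maxHeartbeats 1000000

open Polynomial Filter Finset

/-- `den * x = num` for rationals. -/
private lemma aux_den_mul_self (x : ℚ) : (x.den : ℚ) * x = (x.num : ℚ) := by
  have hd : ((x.den : ℚ)) ≠ 0 := by
    exact_mod_cast x.den_nz
  rw [mul_comm]
  conv_lhs => lhs; rw [← Rat.num_div_den x]
  exact div_mul_cancel₀ _ hd

/-- Clearing denominators in a truncated evaluation at `1/q`. -/
private lemma aux_int (q : ℕ) (hq : 0 < q) (c : ℕ → ℚ) (n : ℕ) :
    ∃ z : ℤ,
      (∏ j ∈ Finset.range n, ((c j).den : ℚ)) *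
          (∑ j ∈ Finset.range n, c j * ((q : ℚ))⁻¹ ^ j) * (q : ℚ) ^ n
        = (z : ℚ) * (q : ℚ) := by
  induction n with
  | zero => exact ⟨0, by simp⟩
  | succ n ih =>
    obtain ⟨z, hz⟩ := ih
    have hq0 : ((q : ℚ)) ≠ 0 := by positivity
    have hnum : ((c n).den : ℚ) * c n = ((c n).num : ℚ) := aux_den_mul_self (c n)
    have hpow : ((q : ℚ))⁻¹ ^ n * (q : ℚ) ^ n = 1 := by
      rw [← mul_pow, inv_mul_cancel₀ hq0, one_pow]
    refine ⟨((c n).den : ℤ) * z * q + (∏ j ∈ Finset.range n, ((c j).den : ℤ)) * (c n).num, ?_⟩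
    rw [Finset.prod_range_succ, Finset.sum_range_succ]
    push_cast
    linear_combination (((c n).den : ℚ) * (q : ℚ)) * hz +
      ((∏ j ∈ Finset.range n, ((c j).den : ℚ)) * (q : ℚ) * ((c n).den : ℚ) * (c n)) * hpow +
      ((∏ j ∈ Finset.range n, ((c j).den : ℚ)) * (q : ℚ)) * hnum

/-- If `P + Q * f = 0` near `0` with `Q ≠ 0`, then `f` agrees with a rational function near 0. -/
private lemma aux_rat (f : ℂ → ℂ) (hf : ContinuousAt f 0) :
    ∀ (n : ℕ) (Q : Polynomial ℂ), Q.natDegree = n → Q ≠ 0 → ∀ P : Polynomial ℂ,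
      (∀ᶠ z in nhds (0 : ℂ), P.eval z + Q.eval z * f z = 0) →
      ∃ P' Q' : Polynomial ℂ, Q' ≠ 0 ∧
        ∀ᶠ z in nhds (0 : ℂ), f z = Polynomial.eval z P' / Polynomial.eval z Q' := by
  intro n
  induction n using Nat.strong_induction_on with
  | _ n ih =>
    intro Q hdeg hQ P hE
    by_cases hQ0 : Q.eval 0 = 0
    · -- divide both polynomials by X and recurse
      have hP0 : P.eval 0 = 0 := by
        have h := hE.self_of_nhds
        simpa [hQ0] using h
      obtain ⟨Q₁, hQ₁⟩ : (X : Polynomial ℂ) ∣ Q := by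
        rw [X_dvd_iff, coeff_zero_eq_eval_zero]; exact hQ0
      obtain ⟨P₁, hP₁⟩ : (X : Polynomial ℂ) ∣ P := by
        rw [X_dvd_iff, coeff_zero_eq_eval_zero]; exact hP0
      have hQ₁0 : Q₁ ≠ 0 := by
        intro h; apply hQ; rw [hQ₁, h, mul_zero]
      have hXne : (X : Polynomial ℂ) ≠ 0 := X_ne_zero
      have hdeg' : Q₁.natDegree < n := by
        rw [← hdeg, hQ₁, natDegree_mul hXne hQ₁0, natDegree_X]
        omega
      -- the relation divided by `z`
      have hE1 : ∀ᶠ z in nhds (0 : ℂ), z ≠ 0 → P₁.eval z + Q₁.eval z * f z = 0 := by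
        filter_upwards [hE] with z h hz
        rw [hP₁, hQ₁, eval_mul, eval_mul, eval_X] at h
        have : z * (P₁.eval z + Q₁.eval z * f z) = 0 := by linear_combination h
        rcases mul_eq_zero.mp this with h' | h'
        · exact absurd h' hz
        · exact h'
      have hB : ContinuousAt (fun z => P₁.eval z + Q₁.eval z * f z) 0 := by
        exact ((P₁.continuous).continuousAt).add (((Q₁.continuous).continuousAt).mul hf)
      have hB0 : P₁.eval 0 + Q₁.eval 0 * f 0 = 0 := by
        have h1 : ∀ᶠ z in nhdsWithin (0 : ℂ) {0}ᶜ,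
            (fun z => P₁.eval z + Q₁.eval z * f z) z = 0 := by
          rw [eventually_nhdsWithin_iff]
          filter_upwards [hE1] with z h hz
          exact h hz
        have h2 : Tendsto (fun z => P₁.eval z + Q₁.eval z * f z)
            (nhdsWithin (0 : ℂ) {0}ᶜ) (nhds 0) :=
          Tendsto.congr' (h1.mono fun z hz => hz.symm) tendsto_const_nhds
        have h3 : Tendsto (fun z => P₁.eval z + Q₁.eval z * f z)
            (nhdsWithin (0 : ℂ) {0}ᶜ) (nhds (P₁.eval 0 + Q₁.eval 0 * f 0)) :=
          hB.tendsto.mono_left nhdsWithin_le_nhds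
        exact tendsto_nhds_unique h3 h2
      have hE' : ∀ᶠ z in nhds (0 : ℂ), P₁.eval z + Q₁.eval z * f z = 0 := by
        filter_upwards [hE1] with z h
        by_cases hz : z = 0
        · rw [hz]; exact hB0
        · exact h hz
      exact ih _ hdeg' Q₁ rfl hQ₁0 P₁ hE'
    · refine ⟨-P, Q, hQ, ?_⟩
      have hev : ∀ᶠ z in nhds (0 : ℂ), Q.eval z ≠ 0 :=
        ((Q.continuous).continuousAt).eventually_ne hQ0
      filter_upwards [hE, hev] with z h1 h2
      rw [eval_neg]
      field_simp
      linear_combination h1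

/-- Let `t` be a positive integer and `Ω ⊆ ℂ` an open neighborhood of the
origin. There is no function `f` analytic on `Ω`, not agreeing on any neighborhood of `0` with
a quotient of two complex polynomials, whose Taylor coefficients `aₖ = f⁽ᵏ⁾(0)/k!` are rational
for all `0 ≤ k ≤ t`, mapping `ℚ ∩ Ω` into `ℚ`, and such that for some `C > 0` and integer `q₀`
one has `den f(p/q) ≤ C * q^(t/2)` for all rationals `p/q ∈ Ω` in lowest terms with `q ≥ q₀`. -/
theorem no_transcendental_with_small_denominators_half
    (t : ℕ) (ht : 0 < t) (Ω : Set ℂ) (hΩ : IsOpen Ω) (h0 : (0 : ℂ) ∈ Ω) :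
    ¬ ∃ f : ℂ → ℂ,
      AnalyticOnNhd ℂ f Ω ∧
      (¬ ∃ (P Q : Polynomial ℂ), Q ≠ 0 ∧
        ∀ᶠ z in nhds (0 : ℂ), f z = Polynomial.eval z P / Polynomial.eval z Q) ∧
      (∀ k : ℕ, k ≤ t → ∃ a : ℚ, iteratedDeriv k f 0 = (a : ℂ) * (Nat.factorial k)) ∧
      (∀ r : ℚ, (r : ℂ) ∈ Ω → ∃ s : ℚ, f (r : ℂ) = (s : ℂ)) ∧
      (∃ C : ℝ, 0 < C ∧ ∃ q₀ : ℕ, ∀ r : ℚ, (r : ℂ) ∈ Ω → q₀ ≤ r.den →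
        ∀ s : ℚ, f (r : ℂ) = (s : ℂ) → (s.den : ℝ) ≤ C * (r.den : ℝ) ^ ((t : ℝ) / 2)) := by
  rintro ⟨f, hfa, hnotrat, hcoeff, hval, C, hC, q₀, hden⟩
  obtain ⟨ε, hε, hballΩ⟩ := Metric.isOpen_iff.mp hΩ 0 h0
  set L : ℕ := (t + 1) / 2 with hLdef
  -- total family of rational Taylor coefficients
  have hcoeff' : ∀ k : ℕ, ∃ b : ℚ, (k ≤ t → iteratedDeriv k f 0 = (b : ℂ) * (Nat.factorial k)) := by
    intro k
    by_cases hk : k ≤ t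
    · obtain ⟨b, hb⟩ := hcoeff k hk; exact ⟨b, fun _ => hb⟩
    · exact ⟨0, fun h => absurd h hk⟩
  choose a ha using hcoeff'
  -- power series of f at 0
  have hf0 : AnalyticAt ℂ f 0 := hfa 0 h0
  have hcont : ContinuousAt f 0 := hf0.continuousAt
  obtain ⟨pf, hpfat⟩ := hf0
  obtain ⟨rad, hser⟩ := hpfat
  have hcoeff_pf : ∀ k, k ≤ t → pf.coeff k = ((a k : ℚ) : ℂ) := by
    intro k hk
    have h1 := hser.factorial_smul (1 : ℂ) k
    rw [FormalMultilinearSeries.apply_eq_pow_smul_coeff, one_pow, one_smul,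
      ← iteratedDeriv_eq_iteratedFDeriv] at h1
    have h2 := ha k hk
    rw [← h1, nsmul_eq_mul] at h2
    have hfac : ((Nat.factorial k : ℂ)) ≠ 0 := by
      exact_mod_cast Nat.factorial_ne_zero k
    have h3 : ((Nat.factorial k : ℂ)) * pf.coeff k
        = ((Nat.factorial k : ℂ)) * ((a k : ℚ) : ℂ) := by
      rw [h2]; ring
    exact mul_left_cancel₀ hfac h3
  -- Taylor polynomial over ℚ
  set T : ℚ[X] := ∑ k ∈ Finset.range (t + 1), Polynomial.C (a k) * X ^ k with hTdef
  have haevalT : ∀ z : ℂ, (aeval z T : ℂ) = pf.partialSum (t + 1) z := by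
    intro z
    rw [FormalMultilinearSeries.partialSum, hTdef, map_sum]
    refine Finset.sum_congr rfl fun k hk => ?_
    rw [Finset.mem_range, Nat.lt_succ_iff] at hk
    rw [map_mul, map_pow, aeval_X, aeval_C,
      FormalMultilinearSeries.apply_eq_pow_smul_coeff, hcoeff_pf k hk, smul_eq_mul,
      eq_ratCast (algebraMap ℚ ℂ)]
    ring
  -- linear algebra: build P, Q
  set pol : (Fin (L + 1) → ℚ) → ℚ[X] :=
    fun v => ∑ j : Fin (L + 1), Polynomial.C (v j) * X ^ (j : ℕ) with hpoldef
  have hpol_coeff : ∀ v (j : Fin (L + 1)), (pol v).coeff (j : ℕ) = v j := by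
    intro v j
    simp only [hpoldef]
    rw [finset_sum_coeff, Finset.sum_eq_single j]
    · rw [coeff_C_mul, coeff_X_pow, if_pos rfl, mul_one]
    · intro i _ hij
      rw [coeff_C_mul, coeff_X_pow, if_neg (fun h => hij (Fin.ext h.symm)), mul_zero]
    · intro h; exact absurd (Finset.mem_univ j) h
  have hpol_deg : ∀ v, (pol v).natDegree ≤ L := by
    intro v
    simp only [hpoldef]
    refine natDegree_sum_le_of_forall_le _ _ fun j _ => ?_
    exact (natDegree_C_mul_X_pow_le _ _).trans j.is_le
  have hpol_add : ∀ v w, pol (v + w) = pol v + pol w := by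
    intro v w
    simp only [hpoldef, Pi.add_apply, map_add, add_mul, Finset.sum_add_distrib]
  have hpol_smul : ∀ (c : ℚ) v, pol (c • v) = Polynomial.C c * pol v := by
    intro c v
    simp only [hpoldef, Pi.smul_apply, smul_eq_mul, map_mul, Finset.mul_sum, mul_assoc]
  set Φ : ((Fin (L + 1) → ℚ) × (Fin (L + 1) → ℚ)) →ₗ[ℚ] (Fin (t + 1) → ℚ) :=
    { toFun := fun v k => (pol v.1 + pol v.2 * T).coeff (k : ℕ)
      map_add' := by
        intro v w
        funext k
        show (pol (v.1 + w.1) + pol (v.2 + w.2) * T).coeff (k : ℕ)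
          = (pol v.1 + pol v.2 * T).coeff (k : ℕ) + (pol w.1 + pol w.2 * T).coeff (k : ℕ)
        rw [hpol_add, hpol_add,
          show pol v.1 + pol w.1 + (pol v.2 + pol w.2) * T
            = (pol v.1 + pol v.2 * T) + (pol w.1 + pol w.2 * T) by ring, coeff_add]
      map_smul' := by
        intro c v
        funext k
        show (pol (c • v.1) + pol (c • v.2) * T).coeff (k : ℕ)
          = c * (pol v.1 + pol v.2 * T).coeff (k : ℕ)
        rw [hpol_smul, hpol_smul, ← coeff_C_mul]
        congr 1
        ring } with hΦdef
  have hker : LinearMap.ker Φ ≠ ⊥ := by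
    intro hbot
    have hinj : Function.Injective Φ := LinearMap.ker_eq_bot.mp hbot
    have hle := LinearMap.finrank_le_finrank_of_injective hinj
    rw [Module.finrank_prod, Module.finrank_fin_fun, Module.finrank_fin_fun] at hle
    omega
  obtain ⟨v, hvker, hvne⟩ := (Submodule.ne_bot_iff _).mp hker
  set P : ℚ[X] := pol v.1 with hPdef
  set Q : ℚ[X] := pol v.2 with hQdef
  have hkerc : ∀ k, k ≤ t → (P + Q * T).coeff k = 0 := by
    intro k hk
    have h1 := LinearMap.mem_ker.mp hvker
    have h2 := congrFun h1 ⟨k, by omega⟩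
    exact h2
  obtain ⟨S, hS⟩ : (X : ℚ[X]) ^ (t + 1) ∣ (P + Q * T) := by
    rw [X_pow_dvd_iff]
    intro d hd
    exact hkerc d (by omega)
  have hPQcoeff : ∀ (w : Fin (L + 1) → ℚ), pol w = 0 → w = 0 := by
    intro w hw
    funext j
    rw [← hpol_coeff w j, hw, coeff_zero]
    rfl
  have hQne : Q ≠ 0 := by
    intro hQ0
    have hPne : P ≠ 0 := by
      intro hP0
      apply hvne
      have h1 : v.1 = 0 := hPQcoeff v.1 hP0
      have h2 : v.2 = 0 := hPQcoeff v.2 hQ0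
      exact Prod.ext h1 h2
    have hdvd : (X : ℚ[X]) ^ (t + 1) ∣ P := by
      rw [hQ0, zero_mul, add_zero] at hS
      exact ⟨S, hS⟩
    have h1 := natDegree_le_of_dvd hdvd hPne
    rw [natDegree_X_pow] at h1
    have h2 := hpol_deg v.1
    rw [← hPdef] at h2
    omega
  -- analytic bound for A = P + Q f
  obtain ⟨r', hr'pos, hr'rad⟩ := ENNReal.lt_iff_exists_nnreal_btwn.mp hser.r_pos
  obtain ⟨aa, haa, C₁, hC₁, happ⟩ := hser.uniform_geometric_approx' hr'rad
  have hr'0 : (0 : ℝ) < r' := by exact_mod_cast hr'pos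
  set Cg : ℝ := C₁ * (aa / r') ^ (t + 1) with hCgdef
  have hCg0 : 0 ≤ Cg := by
    have h1 : (0 : ℝ) ≤ aa / r' := div_nonneg haa.1.le hr'0.le
    exact mul_nonneg hC₁.le (pow_nonneg h1 _)
  have hgbound : ∀ z : ℂ, ‖z‖ < r' → ‖f z - aeval z T‖ ≤ Cg * ‖z‖ ^ (t + 1) := by
    intro z hz
    have h1 := happ z (by simpa [Metric.mem_ball, dist_zero_right] using hz) (t + 1)
    rw [zero_add] at h1
    rw [haevalT]
    calc ‖f z - pf.partialSum (t + 1) z‖ ≤ C₁ * (aa * (‖z‖ / r')) ^ (t + 1) := h1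
      _ = Cg * ‖z‖ ^ (t + 1) := by rw [hCgdef]; ring
  set rr : ℝ := min ((r' : ℝ) / 2) 1 with hrrdef
  have hrr0 : 0 < rr := by
    rw [hrrdef]
    exact lt_min (by linarith) one_pos
  obtain ⟨MS, hMS⟩ := (isCompact_closedBall (0 : ℂ) rr).exists_bound_of_continuousOn
    (S.continuous_aeval).continuousOn
  obtain ⟨MQ, hMQ⟩ := (isCompact_closedBall (0 : ℂ) rr).exists_bound_of_continuousOn
    (Q.continuous_aeval).continuousOn
  set cA : ℝ := max MS 0 + max MQ 0 * Cg with hcAdef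
  have hcA0 : 0 ≤ cA :=
    add_nonneg (le_max_right _ _) (mul_nonneg (le_max_right _ _) hCg0)
  have hAbound : ∀ z : ℂ, ‖z‖ ≤ rr →
      ‖(aeval z P) + (aeval z Q) * f z‖ ≤ cA * ‖z‖ ^ (t + 1) := by
    intro z hz
    have hzr' : ‖z‖ < r' := by
      have : rr ≤ (r' : ℝ) / 2 := min_le_left _ _
      linarith
    have hzball : z ∈ Metric.closedBall (0 : ℂ) rr := by
      simpa [Metric.mem_closedBall, dist_zero_right] using hz
    have hid : (aeval z P) + (aeval z Q) * f z
        = z ^ (t + 1) * (aeval z S) + (aeval z Q) * (f z - aeval z T) := by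
      have h1 : (aeval z (P + Q * T) : ℂ) = aeval z P + aeval z Q * aeval z T := by
        rw [map_add, map_mul]
      have h2 : (aeval z (P + Q * T) : ℂ) = z ^ (t + 1) * aeval z S := by
        rw [hS, map_mul, map_pow, aeval_X]
      linear_combination h2 - h1
    rw [hid]
    have hnz : (0:ℝ) ≤ ‖z‖ ^ (t+1) := by positivity
    calc ‖z ^ (t + 1) * aeval z S + aeval z Q * (f z - aeval z T)‖
        ≤ ‖z ^ (t + 1) * aeval z S‖ + ‖aeval z Q * (f z - aeval z T)‖ := norm_add_le _ _
      _ = ‖z‖ ^ (t + 1) * ‖aeval z S‖ + ‖aeval z Q‖ * ‖f z - aeval z T‖ := by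
          rw [norm_mul, norm_mul, norm_pow]
      _ ≤ ‖z‖ ^ (t + 1) * max MS 0 + max MQ 0 * (Cg * ‖z‖ ^ (t + 1)) := by
          have e1 : ‖(aeval z S : ℂ)‖ ≤ max MS 0 := (hMS z hzball).trans (le_max_left _ _)
          have e2 : ‖(aeval z Q : ℂ)‖ ≤ max MQ 0 := (hMQ z hzball).trans (le_max_left _ _)
          have e3 : ‖f z - aeval z T‖ ≤ Cg * ‖z‖ ^ (t + 1) := hgbound z hzr'
          have p1 : ‖z‖ ^ (t + 1) * ‖(aeval z S : ℂ)‖ ≤ ‖z‖ ^ (t + 1) * max MS 0 :=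
            mul_le_mul_of_nonneg_left e1 hnz
          have p2 : ‖(aeval z Q : ℂ)‖ * ‖f z - aeval z T‖ ≤ max MQ 0 * (Cg * ‖z‖ ^ (t + 1)) :=
            mul_le_mul e2 e3 (norm_nonneg _) ((norm_nonneg _).trans e2)
          linarith
      _ = cA * ‖z‖ ^ (t + 1) := by rw [hcAdef]; ring
  -- denominators of coefficients
  set DP : ℕ := ∏ j ∈ Finset.range (L + 1), (P.coeff j).den with hDPdef
  set DQ : ℕ := ∏ j ∈ Finset.range (L + 1), (Q.coeff j).den with hDQdef
  have hDP0 : 0 < DP := Finset.prod_pos fun j _ => (P.coeff j).pos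
  have hDQ0 : 0 < DQ := Finset.prod_pos fun j _ => (Q.coeff j).pos
  set K : ℝ := (DP : ℝ) * DQ * C * cA with hKdef
  have hK0 : 0 ≤ K :=
    mul_nonneg (mul_nonneg (mul_nonneg (Nat.cast_nonneg _) (Nat.cast_nonneg _)) hC.le) hcA0
  -- choose the threshold
  obtain ⟨N₁, hN₁⟩ := exists_nat_gt (max (max (1 / ε) (1 / rr)) (K ^ 2))
  set N : ℕ := max N₁ (max q₀ 1) with hNdef
  -- main quantitative step
  have hzeroA : ∀ q : ℕ, N ≤ q →
      (aeval (((q : ℚ)⁻¹ : ℚ) : ℂ) P) + (aeval (((q : ℚ)⁻¹ : ℚ) : ℂ) Q)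
        * f (((q : ℚ)⁻¹ : ℚ) : ℂ) = 0 := by
    intro q hq
    have hq1 : 1 ≤ q := le_trans (le_trans (le_max_right q₀ 1) (le_max_right N₁ _)) hq
    have hqq₀ : q₀ ≤ q := le_trans (le_trans (le_max_left q₀ 1) (le_max_right N₁ _)) hq
    have hqN₁ : N₁ ≤ q := le_trans (le_max_left _ _) hq
    have hqR1 : (1 : ℝ) ≤ (q : ℝ) := by exact_mod_cast hq1
    have hqR0 : (0 : ℝ) < (q : ℝ) := by linarith
    have hqthr : max (max (1 / ε) (1 / rr)) (K ^ 2) < (q : ℝ) := by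
      calc max (max (1 / ε) (1 / rr)) (K ^ 2) < (N₁ : ℝ) := hN₁
        _ ≤ (q : ℝ) := by exact_mod_cast hqN₁
    have hqε : 1 / ε < (q : ℝ) := lt_of_le_of_lt (le_trans (le_max_left _ _) (le_max_left _ _)) hqthr
    have hqrr : 1 / rr < (q : ℝ) := lt_of_le_of_lt (le_trans (le_max_right _ _) (le_max_left _ _)) hqthr
    have hqK : K ^ 2 < (q : ℝ) := lt_of_le_of_lt (le_max_right _ _) hqthr
    set rq : ℚ := (q : ℚ)⁻¹ with hrqdef
    have hrqden : rq.den = q := Rat.inv_natCast_den_of_pos (by omega)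
    have hrqR : ((rq : ℚ) : ℝ) = ((q : ℝ))⁻¹ := by
      rw [hrqdef]; push_cast; ring
    have hnorm : ‖((rq : ℚ) : ℂ)‖ = ((q : ℝ))⁻¹ := by
      rw [Complex.norm_ratCast, hrqR, abs_of_nonneg (by positivity)]
    have hqinv_lt_ε : ((q : ℝ))⁻¹ < ε := by
      rw [inv_lt_comm₀ hqR0 hε]
      rw [one_div] at hqε
      exact hqε
    have hqinv_le_rr : ((q : ℝ))⁻¹ ≤ rr := by
      have h' : ((q : ℝ))⁻¹ < rr := by
        rw [inv_lt_comm₀ hqR0 hrr0]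
        rw [one_div] at hqrr
        exact hqrr
      linarith
    have hmem : ((rq : ℚ) : ℂ) ∈ Ω := by
      apply hballΩ
      simp only [Metric.mem_ball, dist_zero_right]
      rw [hnorm]
      exact hqinv_lt_ε
    obtain ⟨s, hs⟩ := hval rq hmem
    have hsden : (s.den : ℝ) ≤ C * (q : ℝ) ^ ((t : ℝ) / 2) := by
      have := hden rq hmem (by omega) s hs
      rwa [hrqden] at this
    have haeval_rat : ∀ R : ℚ[X], (aeval ((rq : ℚ) : ℂ) R) = ((R.eval rq : ℚ) : ℂ) := by
      intro R
      rw [aeval_def, ← eq_ratCast (algebraMap ℚ ℂ) rq, eval₂_at_apply,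
        eq_ratCast (algebraMap ℚ ℂ)]
    set ρ : ℚ := P.eval rq + Q.eval rq * s with hρdef
    have hAρ : (aeval ((rq : ℚ) : ℂ) P) + (aeval ((rq : ℚ) : ℂ) Q) * f ((rq : ℚ) : ℂ)
        = ((ρ : ℚ) : ℂ) := by
      rw [hs, haeval_rat P, haeval_rat Q, hρdef]
      push_cast
      ring
    have hρ0 : ρ = 0 := by
      by_contra hρne
      -- integer clearing
      obtain ⟨zP, hzP⟩ := aux_int q (by omega) P.coeff (L + 1)
      obtain ⟨zQ, hzQ⟩ := aux_int q (by omega) Q.coeff (L + 1)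
      have hdegP : P.natDegree < L + 1 := Nat.lt_succ_of_le (hPdef ▸ hpol_deg v.1)
      have hdegQ : Q.natDegree < L + 1 := Nat.lt_succ_of_le (hQdef ▸ hpol_deg v.2)
      rw [← eval_eq_sum_range' hdegP] at hzP
      rw [← eval_eq_sum_range' hdegQ] at hzQ
      have hDPQ : ((DP : ℚ)) = ∏ j ∈ Finset.range (L + 1), ((P.coeff j).den : ℚ) := by
        rw [hDPdef]; push_cast; rfl
      have hDQQ : ((DQ : ℚ)) = ∏ j ∈ Finset.range (L + 1), ((Q.coeff j).den : ℚ) := by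
        rw [hDQdef]; push_cast; rfl
      rw [← hDPQ] at hzP
      rw [← hDQQ] at hzQ
      set Z : ℤ := (DQ : ℤ) * s.den * zP + (DP : ℤ) * zQ * s.num with hZdef
      have hsnum : (s.den : ℚ) * s = (s.num : ℚ) := aux_den_mul_self s
      have hZeq : ((DP : ℚ) * DQ * s.den) * ρ * ((q : ℚ)) ^ (L + 1) = (Z : ℚ) * q := by
        rw [hρdef, hZdef]
        push_cast
        linear_combination ((DQ : ℚ) * (s.den : ℚ)) * hzP + ((DP : ℚ) * (s.den : ℚ) * (s : ℚ)) * hzQ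
          + ((DP : ℚ) * (zQ : ℚ) * (q : ℚ)) * hsnum
      have hZne : Z ≠ 0 := by
        intro h0
        rw [h0] at hZeq
        push_cast at hZeq
        have hlhs : ((DP : ℚ) * DQ * s.den) * ρ * ((q : ℚ)) ^ (L + 1) ≠ 0 := by
          have h1 : ((DP : ℚ)) ≠ 0 := by exact_mod_cast hDP0.ne'
          have h2 : ((DQ : ℚ)) ≠ 0 := by exact_mod_cast hDQ0.ne'
          have h3 : ((s.den : ℚ)) ≠ 0 := by exact_mod_cast s.den_nz
          have h4 : ((q : ℚ)) ≠ 0 := by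
            exact_mod_cast (by omega : q ≠ 0)
          exact mul_ne_zero (mul_ne_zero (mul_ne_zero (mul_ne_zero h1 h2) h3) hρne)
            (pow_ne_zero _ h4)
        rw [hZeq] at hlhs
        simp at hlhs
      -- real inequality
      have hZ1 : (1 : ℝ) ≤ |(Z : ℝ)| := by
        have := Int.one_le_abs hZne
        exact_mod_cast this
      have hZeqR : ((DP : ℝ) * DQ * s.den) * ((ρ : ℚ) : ℝ) * ((q : ℝ)) ^ (L + 1) = ((Z : ℤ) : ℝ) * q := by
        exact_mod_cast hZeq
      have hM0 : (0 : ℝ) ≤ (DP : ℝ) * DQ * s.den := by positivity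
      have habs : |(Z : ℝ) * (q : ℝ)|
          = ((DP : ℝ) * DQ * s.den) * |((ρ : ℚ) : ℝ)| * ((q : ℝ)) ^ (L + 1) := by
        rw [← hZeqR, abs_mul, abs_mul, abs_of_nonneg hM0,
          abs_of_nonneg (pow_nonneg hqR0.le (L + 1))]
      -- bound |ρ|
      have hρbound : |((ρ : ℚ) : ℝ)| ≤ cA * ((q : ℝ))⁻¹ ^ (t + 1) := by
        have h1 := hAbound ((rq : ℚ) : ℂ) (by rw [hnorm]; exact hqinv_le_rr)
        rw [hAρ, Complex.norm_ratCast, hnorm] at h1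
        exact h1
      -- combine
      have hchain : (q : ℝ) ≤ K * ((q : ℝ) ^ ((t : ℝ) / 2) * ((q : ℝ)) ^ (L + 1) * ((q : ℝ))⁻¹ ^ (t + 1)) := by
        have h1 : (q : ℝ) ≤ |(Z : ℝ) * (q : ℝ)| := by
          rw [abs_mul, abs_of_nonneg hqR0.le]
          nlinarith
        rw [habs] at h1
        have h2 : ((DP : ℝ) * DQ * s.den) * |((ρ : ℚ) : ℝ)| * ((q : ℝ)) ^ (L + 1)
            ≤ ((DP : ℝ) * DQ * s.den) * (cA * ((q : ℝ))⁻¹ ^ (t + 1)) * ((q : ℝ)) ^ (L + 1) :=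
          mul_le_mul_of_nonneg_right (mul_le_mul_of_nonneg_left hρbound hM0)
            (pow_nonneg hqR0.le _)
        have h3 : ((DP : ℝ) * DQ * s.den) ≤ (DP : ℝ) * DQ * (C * (q : ℝ) ^ ((t : ℝ) / 2)) :=
          mul_le_mul_of_nonneg_left hsden (by positivity)
        have h4 : ((DP : ℝ) * DQ * s.den) * (cA * ((q : ℝ))⁻¹ ^ (t + 1)) * ((q : ℝ)) ^ (L + 1)
            ≤ ((DP : ℝ) * DQ * (C * (q : ℝ) ^ ((t : ℝ) / 2))) * (cA * ((q : ℝ))⁻¹ ^ (t + 1))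
              * ((q : ℝ)) ^ (L + 1) := by
          apply mul_le_mul_of_nonneg_right _ (pow_nonneg hqR0.le _)
          exact mul_le_mul_of_nonneg_right h3
            (mul_nonneg hcA0 (pow_nonneg (inv_nonneg.mpr hqR0.le) _))
        calc (q : ℝ) ≤ ((DP : ℝ) * DQ * s.den) * |((ρ : ℚ) : ℝ)| * ((q : ℝ)) ^ (L + 1) := h1
          _ ≤ ((DP : ℝ) * DQ * s.den) * (cA * ((q : ℝ))⁻¹ ^ (t + 1)) * ((q : ℝ)) ^ (L + 1) := h2
          _ ≤ ((DP : ℝ) * DQ * (C * (q : ℝ) ^ ((t : ℝ) / 2))) * (cA * ((q : ℝ))⁻¹ ^ (t + 1))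
              * ((q : ℝ)) ^ (L + 1) := h4
          _ = K * ((q : ℝ) ^ ((t : ℝ) / 2) * ((q : ℝ)) ^ (L + 1) * ((q : ℝ))⁻¹ ^ (t + 1)) := by
              rw [hKdef]; ring
      -- rpow computation
      have hrpow : (q : ℝ) ^ ((t : ℝ) / 2) * ((q : ℝ)) ^ (L + 1) * ((q : ℝ))⁻¹ ^ (t + 1)
          = (q : ℝ) ^ ((t : ℝ) / 2 + (L + 1 : ℕ) - (t + 1 : ℕ)) := by
        rw [← Real.rpow_natCast (q : ℝ) (L + 1), ← Real.rpow_natCast ((q : ℝ))⁻¹ (t + 1),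
          ← Real.rpow_neg_one (q : ℝ)]
        rw [← Real.rpow_mul hqR0.le, ← Real.rpow_add hqR0, ← Real.rpow_add hqR0]
        congr 1
        push_cast
        ring
      have hexp : (t : ℝ) / 2 + ((L + 1 : ℕ) : ℝ) - ((t + 1 : ℕ) : ℝ) ≤ 1 / 2 := by
        have hLle : ((L : ℕ) : ℝ) ≤ ((t : ℝ) + 1) / 2 := by
          rw [hLdef]
          have := Nat.cast_div_le (α := ℝ) (m := t + 1) (n := 2)
          push_cast at this ⊢
          linarith
        push_cast
        linarith
      have hfinal : (q : ℝ) ≤ K * (q : ℝ) ^ ((1 : ℝ) / 2) := by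
        calc (q : ℝ) ≤ K * ((q : ℝ) ^ ((t : ℝ) / 2 + (L + 1 : ℕ) - (t + 1 : ℕ))) := by
              rw [← hrpow]; exact hchain
          _ ≤ K * (q : ℝ) ^ ((1 : ℝ) / 2) :=
              mul_le_mul_of_nonneg_left (Real.rpow_le_rpow_of_exponent_le hqR1 hexp) hK0
      -- contradiction with q > K^2
      have hsq : (q : ℝ) ^ ((1 : ℝ) / 2) * (q : ℝ) ^ ((1 : ℝ) / 2) = (q : ℝ) := by
        rw [← Real.rpow_add hqR0]
        norm_num
      have hsqpos : 0 < (q : ℝ) ^ ((1 : ℝ) / 2) := Real.rpow_pos_of_pos hqR0 _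
      have h2 : (q : ℝ) ^ ((1 : ℝ) / 2) ≤ K := by
        have h2' : (q : ℝ) ^ ((1 : ℝ) / 2) * (q : ℝ) ^ ((1 : ℝ) / 2) ≤ K * (q : ℝ) ^ ((1 : ℝ) / 2) := by
          rw [hsq]
          exact hfinal
        exact le_of_mul_le_mul_right h2' hsqpos
      have h3 : (q : ℝ) ≤ K ^ 2 := by
        rw [← hsq]
        calc (q : ℝ) ^ ((1:ℝ)/2) * (q : ℝ) ^ ((1:ℝ)/2) ≤ K * K := mul_le_mul h2 h2 hsqpos.le hK0
          _ = K ^ 2 := by ring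
      linarith
    rw [hAρ, hρ0]
    norm_num
  -- identity theorem
  set A : ℂ → ℂ := fun z => (aeval z P) + (aeval z Q) * f z with hAdef
  have hAanal : AnalyticAt ℂ A 0 := by
    apply AnalyticAt.add
    · exact (analyticAt_id).aeval_polynomial P
    · exact ((analyticAt_id).aeval_polynomial Q).mul (hfa 0 h0)
  have htend : Tendsto (fun q : ℕ => (((q : ℚ)⁻¹ : ℚ) : ℂ)) atTop (nhdsWithin 0 {0}ᶜ) := by
    apply tendsto_nhdsWithin_of_tendsto_nhds_of_eventually_within
    · have heq : (fun q : ℕ => (((q : ℚ)⁻¹ : ℚ) : ℂ)) = fun q : ℕ => ((((q : ℝ))⁻¹ : ℝ) : ℂ) := by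
        funext q; push_cast; ring
      rw [heq]
      have h1 : Tendsto (fun q : ℕ => ((q : ℝ))⁻¹) atTop (nhds 0) :=
        tendsto_inv_atTop_zero.comp tendsto_natCast_atTop_atTop
      have := (Complex.continuous_ofReal.tendsto 0).comp h1
      simpa [Function.comp_def] using this
    · filter_upwards [eventually_ge_atTop 1] with q hq
      simp only [Set.mem_compl_iff, Set.mem_singleton_iff]
      intro h
      have : ((q : ℚ)⁻¹ : ℚ) = 0 := by exact_mod_cast h
      rw [inv_eq_zero] at this
      have : (q : ℚ) ≠ 0 := by positivity
      exact this (by assumption)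
  have hfreq : ∃ᶠ z in nhdsWithin (0 : ℂ) {0}ᶜ, A z = 0 := by
    apply htend.frequently
    apply Filter.Eventually.frequently
    filter_upwards [eventually_ge_atTop N] with q hq
    exact hzeroA q hq
  have hevzero : ∀ᶠ z in nhds (0 : ℂ), A z = 0 :=
    hAanal.frequently_zero_iff_eventually_zero.mp hfreq
  -- conclude: f is a rational function near 0
  set Pc : Polynomial ℂ := P.map (algebraMap ℚ ℂ) with hPcdef
  set Qc : Polynomial ℂ := Q.map (algebraMap ℚ ℂ) with hQcdef
  have hQcne : Qc ≠ 0 := by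
    rw [hQcdef]
    exact Polynomial.map_ne_zero hQne
  have hevE : ∀ᶠ z in nhds (0 : ℂ), Pc.eval z + Qc.eval z * f z = 0 := by
    filter_upwards [hevzero] with z hz
    rw [hPcdef, hQcdef, Polynomial.eval_map, Polynomial.eval_map,
      ← Polynomial.aeval_def, ← Polynomial.aeval_def]
    exact hz
  obtain ⟨P', Q', hQ', hEE⟩ := aux_rat f hcont Qc.natDegree Qc rfl hQcne Pc hevE
  exact hnotrat ⟨P', Q', hQ', hEE⟩
end

section
/- Let $t$ be a positive integer, let $\Omega \subseteq \mathbb{C}$ be an open neighborhood of the origin, and let $f$ be analytic on $\Omega$ with Taylor coefficients $a_k$ at $0$ satisfying $a_k \in \mathbb{Q}$ for all $0 \le k \le 2t$. Suppose $f(\mathbb{Q} \cap \Omega) \subseteq \mathbb{Q}$ and there exist a constant $C > 0$ and an integer $q_0$ such that $\operatorname{den} f(p/q) \le C\, q^{t}$ for all rational numbers $p/q \in \Omega$ in lowest terms with $q \ge q_0$. Then there exist polynomials $P, Q \in \mathbb{Q}[z]$ with $\deg P \le t$, $\deg Q \le t$, $Q \ne 0$, such that $f(z) = P(z)/Q(z)$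 for all $z$ in some neighborhood of $0$; in particular $f$ is not transcendental. -/
open Polynomial Filter

private lemma den_dvd_aux {m : ℕ} (hm : m ≠ 0) {v : ℚ} {n : ℤ} (h : (m : ℚ) * v = n) :
    (v.den : ℤ) ∣ (m : ℤ) := by
  have hm' : (m : ℚ) ≠ 0 := Nat.cast_ne_zero.mpr hm
  have hv : v = Rat.divInt n m := by
    rw [Rat.divInt_eq_div]
    field_simp
    push_cast
    linarith [h]
  rw [hv]
  exact_mod_cast Rat.den_dvd n m

private lemma int_mul_eval (t : ℕ) (S : ℚ[X]) (hdeg : S.natDegree ≤ t) (d : ℕ)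
    (hS : ∀ k, (S.coeff k).den ∣ d) (q : ℕ) (hq : 0 < q) :
    ∃ n : ℤ, ((d : ℚ) * (q : ℚ) ^ t) * S.eval ((q : ℚ))⁻¹ = (n : ℚ) := by
  have hq0 : ((q : ℚ)) ≠ 0 := Nat.cast_ne_zero.mpr hq.ne'
  rw [Polynomial.eval_eq_sum_range' (Nat.lt_succ_of_le hdeg), Finset.mul_sum]
  refine ⟨∑ i ∈ Finset.range (t + 1),
      ((d / (S.coeff i).den : ℕ) : ℤ) * (S.coeff i).num * (q : ℤ) ^ (t - i), ?_⟩
  rw [Int.cast_sum]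
  refine Finset.sum_congr rfl fun i hi => ?_
  have hit : i ≤ t := Nat.lt_succ_iff.mp (Finset.mem_range.mp hi)
  have hdvd := hS i
  have h1 : ((d / (S.coeff i).den : ℕ) : ℚ) * ((S.coeff i).den : ℚ) = (d : ℚ) := by
    rw_mod_cast [Nat.div_mul_cancel hdvd]
  have h2 : ((S.coeff i).den : ℚ) * S.coeff i = ((S.coeff i).num : ℚ) := by
    rw [mul_comm]; exact_mod_cast Rat.mul_den_eq_num (S.coeff i)
  have h3 : (q : ℚ) ^ (t - i) = (q : ℚ) ^ t * ((q : ℚ) ^ i)⁻¹ := pow_sub₀ _ hq0 hit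
  have key : (d:ℚ) * (q:ℚ) ^ t * (S.coeff i * ((q:ℚ)⁻¹) ^ i)
      = ((d / (S.coeff i).den : ℕ) : ℚ) * ((S.coeff i).num : ℚ) * (q:ℚ) ^ (t - i) := by
    rw [h3, ← h1, ← h2, inv_pow]; ring
  rw [key, Int.cast_mul, Int.cast_mul, Int.cast_pow, Int.cast_natCast, Int.cast_natCast]

private lemma done_case (f : ℂ → ℂ) (t : ℕ) (P Q : ℚ[X]) (hQ0 : Q.coeff 0 ≠ 0)
    (hP : P.degree ≤ (t : ℕ)) (hQ : Q.degree ≤ (t : ℕ))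
    (hev : ∀ᶠ z in nhds (0:ℂ), Polynomial.aeval z Q * f z = Polynomial.aeval z P) :
    ∃ P' Q' : ℚ[X], P'.degree ≤ (t : ℕ) ∧ Q'.degree ≤ (t : ℕ) ∧ Q' ≠ 0 ∧
      ∀ᶠ z in nhds (0:ℂ), f z = Polynomial.aeval z P' / Polynomial.aeval z Q' := by
  refine ⟨P, Q, hP, hQ, fun h => hQ0 (by simp [h]), ?_⟩
  have hc : ContinuousAt (fun z : ℂ => Polynomial.aeval z Q) 0 :=
    ((analyticAt_id (𝕜 := ℂ) (z := (0:ℂ))).aeval_polynomial Q).continuousAt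
  have hne : Polynomial.aeval (0:ℂ) Q ≠ 0 := by
    rw [Polynomial.aeval_def, Polynomial.eval₂_at_zero]
    simpa using hQ0
  have hev2 : ∀ᶠ z in nhds (0:ℂ), Polynomial.aeval z Q ≠ 0 := hc.eventually_ne hne
  filter_upwards [hev, hev2] with z h1 h2
  rw [eq_div_iff h2, mul_comm, h1]

private lemma descent (f : ℂ → ℂ) (hfa : AnalyticAt ℂ f 0) (t : ℕ) :
    ∀ n : ℕ, ∀ P Q : ℚ[X], Q.natDegree ≤ n → Q ≠ 0 → P.degree ≤ (t : ℕ) → Q.degree ≤ (t : ℕ) →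
    (∀ᶠ z in nhds (0:ℂ), Polynomial.aeval z Q * f z = Polynomial.aeval z P) →
    ∃ P' Q' : ℚ[X], P'.degree ≤ (t : ℕ) ∧ Q'.degree ≤ (t : ℕ) ∧ Q' ≠ 0 ∧
      ∀ᶠ z in nhds (0:ℂ), f z = Polynomial.aeval z P' / Polynomial.aeval z Q' := by
  intro n
  induction n with
  | zero =>
    intro P Q hn hQne hP hQ hev
    refine done_case f t P Q (fun h => hQne ?_) hP hQ hev
    rw [Polynomial.eq_C_of_natDegree_le_zero hn, h, Polynomial.C_0]
  | succ n ih =>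
    intro P Q hn hQne hP hQ hev
    by_cases hc0 : Q.coeff 0 = 0
    · have hQX : X * Q.divX = Q := by
        have := Polynomial.X_mul_divX_add Q
        rwa [hc0, Polynomial.C_0, add_zero] at this
      have hdvx0 : Q.divX ≠ 0 := fun h => hQne (by rw [← hQX, h, mul_zero])
      have hP0 : P.coeff 0 = 0 := by
        have h1 := hev.self_of_nhds
        rw [Polynomial.aeval_def, Polynomial.eval₂_at_zero, hc0] at h1
        simp only [map_zero, zero_mul] at h1
        have h2 : (algebraMap ℚ ℂ) (P.coeff 0) = 0 := by
          rw [← Polynomial.eval₂_at_zero, ← Polynomial.aeval_def, ← h1]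
        simpa using h2
      have hPX : X * P.divX = P := by
        have := Polynomial.X_mul_divX_add P
        rwa [hP0, Polynomial.C_0, add_zero] at this
      have hpunct : ∀ᶠ z in nhdsWithin (0:ℂ) {(0:ℂ)}ᶜ,
          Polynomial.aeval z Q.divX * f z - Polynomial.aeval z P.divX = 0 := by
        rw [eventually_nhdsWithin_iff]
        filter_upwards [hev] with z h1 hz
        have hz0 : z ≠ 0 := hz
        rw [← hQX, ← hPX] at h1
        simp only [map_mul, Polynomial.aeval_X, mul_assoc] at h1
        have := mul_left_cancel₀ hz0 h1
        rw [this, sub_self]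
      have hcont : ContinuousAt
          (fun z : ℂ => Polynomial.aeval z Q.divX * f z - Polynomial.aeval z P.divX) 0 :=
        (((analyticAt_id (𝕜 := ℂ) (z := (0:ℂ))).aeval_polynomial Q.divX).mul hfa).sub
          ((analyticAt_id (𝕜 := ℂ) (z := (0:ℂ))).aeval_polynomial P.divX) |>.continuousAt
      have h00 : Polynomial.aeval (0:ℂ) Q.divX * f 0 - Polynomial.aeval (0:ℂ) P.divX = 0 := by
        have ht1 := hcont.continuousWithinAt (s := {(0:ℂ)}ᶜ)
        have ht2 : Filter.Tendsto
            (fun z : ℂ => Polynomial.aeval z Q.divX * f z - Polynomial.aeval z P.divX)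
            (nhdsWithin (0:ℂ) {(0:ℂ)}ᶜ) (nhds 0) :=
          tendsto_const_nhds.congr' (Filter.EventuallyEq.symm hpunct)
        exact tendsto_nhds_unique ht1 ht2
      have hev' : ∀ᶠ z in nhds (0:ℂ),
          Polynomial.aeval z Q.divX * f z = Polynomial.aeval z P.divX := by
        filter_upwards [eventually_nhdsWithin_iff.mp hpunct] with z hz
        by_cases hz0 : z = 0
        · subst hz0; exact sub_eq_zero.mp h00
        · exact sub_eq_zero.mp (hz hz0)
      have hdegQ' : Q.divX.degree ≤ (t : ℕ) := le_trans (Polynomial.degree_divX_lt hQne).le hQ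
      have hdegP' : P.divX.degree ≤ (t : ℕ) := by
        by_cases hP0' : P = 0
        · rw [hP0']; simp
        · exact le_trans (Polynomial.degree_divX_lt hP0').le hP
      have hn' : Q.divX.natDegree ≤ n := by
        have := Polynomial.natDegree_lt_natDegree hdvx0 (Polynomial.degree_divX_lt hQne)
        omega
      exact ih P.divX Q.divX hn' hdvx0 hdegP' hdegQ' hev'
    · exact done_case f t P Q hc0 hP hQ hev

/-- Let `t` be a positive integer, `Ω ⊆ ℂ` an open neighborhood of the origin,
and `f` analytic on `Ω` with Taylor coefficients `aₖ = f⁽ᵏ⁾(0)/k!` rational for all `0 ≤ k ≤ 2t`.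
Suppose `f(ℚ ∩ Ω) ⊆ ℚ` and there are `C > 0` and an integer `q₀` with `den f(p/q) ≤ C * q^t` for
all rationals `p/q ∈ Ω` in lowest terms with `q ≥ q₀`. Then there are `P, Q ∈ ℚ[z]` of degree at
most `t`, with `Q ≠ 0`, such that `f(z) = P(z)/Q(z)` on some neighborhood of `0`; in particular
`f` is not transcendental. -/
theorem rational_function_of_small_denominators
    (t : ℕ) (ht : 0 < t) (Ω : Set ℂ) (hΩ : IsOpen Ω) (h0 : (0 : ℂ) ∈ Ω)
    (f : ℂ → ℂ) (hf : AnalyticOnNhd ℂ f Ω)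
    (hcoeff : ∀ k : ℕ, k ≤ 2 * t → ∃ a : ℚ, iteratedDeriv k f 0 = (a : ℂ) * (Nat.factorial k))
    (hratval : ∀ r : ℚ, (r : ℂ) ∈ Ω → ∃ s : ℚ, f (r : ℂ) = (s : ℂ))
    (hden : ∃ C : ℝ, 0 < C ∧ ∃ q₀ : ℕ, ∀ r : ℚ, (r : ℂ) ∈ Ω → q₀ ≤ r.den →
      ∀ s : ℚ, f (r : ℂ) = (s : ℂ) → (s.den : ℝ) ≤ C * (r.den : ℝ) ^ (t : ℕ)) :
    ∃ P Q : Polynomial ℚ, P.degree ≤ (t : ℕ) ∧ Q.degree ≤ (t : ℕ) ∧ Q ≠ 0 ∧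
      ∀ᶠ z in nhds (0 : ℂ), f z =
        Polynomial.aeval z P / Polynomial.aeval z Q := by
  classical
  obtain ⟨C, hC, q₀, hdenb⟩ := hden
  -- rational Taylor coefficients
  set a : ℕ → ℚ := fun k => if h : k ≤ 2*t then (hcoeff k h).choose else 0 with ha_def
  have ha : ∀ k, k ≤ 2*t → iteratedDeriv k f 0 = (a k : ℂ) * (Nat.factorial k) := by
    intro k hk
    rw [ha_def]
    simp only [dif_pos hk]
    exact (hcoeff k hk).choose_spec
  -- linear algebra: nontrivial kernel
  obtain ⟨b, hbne, hbeq⟩ : ∃ b : Fin (t+1) → ℚ, b ≠ 0 ∧ ∀ i : Fin t,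
      ∑ j : Fin (t+1), a (t+1+(i:ℕ)-(j:ℕ)) * b j = 0 := by
    let L : (Fin (t+1) → ℚ) →ₗ[ℚ] (Fin t → ℚ) :=
      LinearMap.pi (fun i => ∑ j : Fin (t+1), a (t+1+(i:ℕ)-(j:ℕ)) • LinearMap.proj j)
    have hker : LinearMap.ker L ≠ ⊥ := by
      apply LinearMap.ker_ne_bot_of_finrank_lt
      simp [Module.finrank_fintype_fun_eq_card]
    obtain ⟨b, hbker, hbne⟩ := Submodule.ne_bot_iff _ |>.mp hker
    refine ⟨b, hbne, fun i => ?_⟩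
    have h1 := congrFun (LinearMap.mem_ker.mp hbker) i
    simp only [L, LinearMap.pi_apply, LinearMap.sum_apply, LinearMap.smul_apply,
      LinearMap.proj_apply, Pi.zero_apply, smul_eq_mul] at h1
    exact h1
  -- polynomials
  set b' : ℕ → ℚ := fun j => if h : j < t+1 then b ⟨j, h⟩ else 0 with hb'
  set Qp : ℚ[X] := ∑ j ∈ Finset.range (t+1), Polynomial.monomial j (b' j) with hQp
  set A : ℚ[X] := ∑ k ∈ Finset.range (2*t+1), Polynomial.monomial k (a k) with hA
  set Pp : ℚ[X] := ∑ k ∈ Finset.range (t+1), Polynomial.monomial k ((Qp*A).coeff k) with hPp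
  have hQpcoeff : ∀ m, Qp.coeff m = b' m := by
    intro m
    rw [hQp, Polynomial.finset_sum_coeff]
    simp only [Polynomial.coeff_monomial]
    rw [Finset.sum_ite_eq' (Finset.range (t+1)) m b']
    by_cases hm : m < t+1
    · simp [Finset.mem_range.mpr hm]
    · simp only [Finset.mem_range, hm, if_false]
      rw [hb']; simp [hm]
  have hAcoeff : ∀ m, m ≤ 2*t → A.coeff m = a m := by
    intro m hm
    rw [hA, Polynomial.finset_sum_coeff]
    simp only [Polynomial.coeff_monomial]
    rw [Finset.sum_ite_eq' (Finset.range (2*t+1)) m a]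
    simp [Finset.mem_range.mpr (by omega : m < 2*t+1)]
  have hPpcoeff : ∀ m, Pp.coeff m = if m < t+1 then (Qp*A).coeff m else 0 := by
    intro m
    rw [hPp, Polynomial.finset_sum_coeff]
    simp only [Polynomial.coeff_monomial]
    rw [Finset.sum_ite_eq' (Finset.range (t+1)) m _]
    simp [Finset.mem_range]
  have hQdeg : Qp.degree ≤ (t : ℕ) := by
    refine (Polynomial.degree_sum_le _ _).trans ?_
    refine Finset.sup_le fun j hj => (Polynomial.degree_monomial_le j _).trans ?_
    exact_mod_cast Nat.cast_le.mpr (Nat.lt_succ_iff.mp (Finset.mem_range.mp hj))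
  have hPdeg : Pp.degree ≤ (t : ℕ) := by
    refine (Polynomial.degree_sum_le _ _).trans ?_
    refine Finset.sup_le fun j hj => (Polynomial.degree_monomial_le j _).trans ?_
    exact_mod_cast Nat.cast_le.mpr (Nat.lt_succ_iff.mp (Finset.mem_range.mp hj))
  have hQnat : Qp.natDegree ≤ t := Polynomial.natDegree_le_iff_degree_le.mpr hQdeg
  have hPnat : Pp.natDegree ≤ t := Polynomial.natDegree_le_iff_degree_le.mpr hPdeg
  have hQpne : Qp ≠ 0 := by
    obtain ⟨j, hj⟩ := Function.ne_iff.mp hbne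
    intro h
    apply hj
    have := hQpcoeff j
    rw [h, Polynomial.coeff_zero] at this
    rw [hb'] at this
    simpa [j.isLt] using this.symm
  have hkey : ∀ k, k ≤ 2*t → (Qp * A - Pp).coeff k = 0 := by
    intro k hk
    rw [Polynomial.coeff_sub, hPpcoeff]
    by_cases hkt : k < t+1
    · rw [if_pos hkt, sub_self]
    · rw [if_neg hkt, sub_zero, Polynomial.coeff_mul,
        Finset.Nat.sum_antidiagonal_eq_sum_range_succ_mk]
      have hsub : ∑ j ∈ Finset.range (k+1), Qp.coeff j * A.coeff (k-j)
          = ∑ j ∈ Finset.range (t+1), Qp.coeff j * A.coeff (k-j) := by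
        refine (Finset.sum_subset (Finset.range_subset_range.mpr (by omega)) ?_).symm
        intro x hx hnx
        rw [hQpcoeff, hb']
        simp only [Finset.mem_range, not_lt] at hnx
        simp [Nat.not_lt.mpr hnx]
      rw [hsub, Finset.sum_range fun j => Qp.coeff j * A.coeff (k-j)]
      have hi : k - (t+1) < t := by omega
      have := hbeq ⟨k - (t+1), hi⟩
      rw [← this]
      refine Finset.sum_congr rfl fun j _ => ?_
      have hkj : t+1+(k-(t+1)) - (j:ℕ) = k - (j:ℕ) := by omega
      rw [hkj, hQpcoeff, hAcoeff _ (by omega), hb']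
      simp [j.isLt, mul_comm]
  obtain ⟨R, hR⟩ : X^(2*t+1) ∣ (Qp*A - Pp) :=
    Polynomial.X_pow_dvd_iff.mpr (fun d hd => hkey d (by omega))
  -- analytic estimate
  have hfa : AnalyticAt ℂ f 0 := hf 0 h0
  obtain ⟨M, hM0, hMev⟩ : ∃ M : ℝ, 0 < M ∧ ∀ᶠ z in nhds (0:ℂ),
      ‖Polynomial.aeval z Qp * f z - Polynomial.aeval z Pp‖ ≤ M * ‖z‖^(2*t+1) := by
    obtain ⟨F, hFp⟩ := hfa
    have hFcoeff : ∀ k, k ≤ 2*t → F.coeff k = (a k : ℂ) := by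
      intro k hk
      obtain ⟨r, hFb⟩ := hFp
      have h1 := hFb.factorial_smul (y := (1:ℂ)) k
      rw [iteratedFDeriv_apply_eq_iteratedDeriv_mul_prod] at h1
      simp only [Finset.prod_const, one_pow, one_smul] at h1
      have h2 : (Nat.factorial k : ℂ) * F.coeff k = (Nat.factorial k : ℂ) * (a k : ℂ) := by
        have e : F.coeff k = (F k) fun _ => 1 := rfl
        rw [e, ← nsmul_eq_mul, h1, ha k hk, mul_comm]
      have hfac : (Nat.factorial k : ℂ) ≠ 0 := Nat.cast_ne_zero.mpr (Nat.factorial_ne_zero k)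
      exact mul_left_cancel₀ hfac h2
    have hTA : ∀ z : ℂ, F.partialSum (2*t+1) z = Polynomial.aeval z A := by
      intro z
      rw [FormalMultilinearSeries.partialSum, hA, map_sum]
      refine Finset.sum_congr rfl fun k hk => ?_
      rw [FormalMultilinearSeries.apply_eq_pow_smul_coeff,
        hFcoeff k (Nat.lt_succ_iff.mp (Finset.mem_range.mp hk)), Polynomial.aeval_monomial,
        eq_ratCast]
      rw [smul_eq_mul, mul_comm]
    have hO1 : (fun z : ℂ => f z - Polynomial.aeval z A) =O[nhds 0] fun z => ‖z‖^(2*t+1) := by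
      have h := hFp.isBigO_sub_partialSum_pow (2*t+1)
      simp only [zero_add] at h
      refine h.congr' ?_ Filter.EventuallyEq.rfl
      filter_upwards with z
      rw [hTA z]
    have hgid : ∀ z : ℂ, Polynomial.aeval z Qp * f z - Polynomial.aeval z Pp
        = Polynomial.aeval z Qp * (f z - Polynomial.aeval z A)
          + z^(2*t+1) * Polynomial.aeval z R := by
      intro z
      have h1 : Polynomial.aeval z (Qp*A-Pp) = Polynomial.aeval z (X^(2*t+1)*R) := by rw [hR]
      simp only [map_sub, map_mul, map_pow, Polynomial.aeval_X] at h1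
      linear_combination h1
    have hQb : (fun z : ℂ => Polynomial.aeval z Qp) =O[nhds (0:ℂ)] (fun _ => (1:ℝ)) :=
      Filter.Tendsto.isBigO_one ℝ
        ((analyticAt_id (𝕜 := ℂ) (z := (0:ℂ))).aeval_polynomial Qp).continuousAt.tendsto
    have hRb : (fun z : ℂ => Polynomial.aeval z R) =O[nhds (0:ℂ)] (fun _ => (1:ℝ)) :=
      Filter.Tendsto.isBigO_one ℝ
        ((analyticAt_id (𝕜 := ℂ) (z := (0:ℂ))).aeval_polynomial R).continuousAt.tendsto
    have h1 := hQb.mul hO1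
    have h2 := ((Asymptotics.isBigO_refl (fun z : ℂ => z^(2*t+1)) (nhds 0)).norm_right).mul hRb
    have h1' : (fun z : ℂ => Polynomial.aeval z Qp * (f z - Polynomial.aeval z A))
        =O[nhds 0] fun z => ‖z‖^(2*t+1) := by
      refine h1.trans ?_
      refine Asymptotics.isBigO_of_le _ fun z => ?_
      simp [abs_of_nonneg (pow_nonneg (norm_nonneg z) _)]
    have h2' : (fun z : ℂ => z^(2*t+1) * Polynomial.aeval z R)
        =O[nhds 0] fun z => ‖z‖^(2*t+1) := by
      refine h2.trans ?_
      refine Asymptotics.isBigO_of_le _ fun z => ?_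
      simp [abs_of_nonneg (pow_nonneg (norm_nonneg z) _)]
    have hgO : (fun z : ℂ => Polynomial.aeval z Qp * f z - Polynomial.aeval z Pp)
        =O[nhds 0] fun z => ‖z‖^(2*t+1) := by
      refine Asymptotics.IsBigO.congr' ?_ (by filter_upwards with z using (hgid z).symm)
        Filter.EventuallyEq.rfl
      exact h1'.add h2'
    obtain ⟨M, hM⟩ := hgO.bound
    refine ⟨max M 1, lt_of_lt_of_le one_pos (le_max_right _ _), ?_⟩
    filter_upwards [hM] with z hz
    refine le_trans hz ?_
    have : ‖‖z‖^(2*t+1)‖ = ‖z‖^(2*t+1) := by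
      simp [abs_of_nonneg (pow_nonneg (norm_nonneg z) _)]
    rw [this]
    exact mul_le_mul_of_nonneg_right (le_max_left _ _) (pow_nonneg (norm_nonneg z) _)
  -- ball where everything holds
  obtain ⟨ε, hε, hballs⟩ : ∃ ε > 0, ∀ z : ℂ, dist z 0 < ε →
      (z ∈ Ω ∧ ‖Polynomial.aeval z Qp * f z - Polynomial.aeval z Pp‖ ≤ M * ‖z‖^(2*t+1)) :=
    Metric.eventually_nhds_iff.mp ((hΩ.eventually_mem h0).and hMev)
  -- common denominator
  set D : ℕ := (∏ j ∈ Finset.range (t+1), (Qp.coeff j).den)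
      * (∏ k ∈ Finset.range (t+1), (Pp.coeff k).den) with hD
  have hD0 : 0 < D :=
    mul_pos (Finset.prod_pos fun j _ => (Qp.coeff j).pos) (Finset.prod_pos fun k _ => (Pp.coeff k).pos)
  have hQD : ∀ k, (Qp.coeff k).den ∣ D := by
    intro k
    by_cases hk : k < t+1
    · exact Dvd.dvd.mul_right (Finset.dvd_prod_of_mem _ (Finset.mem_range.mpr hk)) _
    · have : Qp.coeff k = 0 :=
        Polynomial.coeff_eq_zero_of_natDegree_lt (lt_of_le_of_lt hQnat (by omega))
      rw [this]
      simp
  have hPD : ∀ k, (Pp.coeff k).den ∣ D := by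
    intro k
    by_cases hk : k < t+1
    · exact Dvd.dvd.mul_left (Finset.dvd_prod_of_mem _ (Finset.mem_range.mpr hk)) _
    · have : Pp.coeff k = 0 :=
        Polynomial.coeff_eq_zero_of_natDegree_lt (lt_of_le_of_lt hPnat (by omega))
      rw [this]
      simp
  -- choose N
  obtain ⟨N₁, hN₁⟩ := exists_nat_gt (1/ε)
  obtain ⟨N₂, hN₂⟩ := exists_nat_gt (M * ((D:ℝ) * C))
  set N := max (max N₁ N₂) (max q₀ 1) with hN
  have hzero : ∀ q : ℕ, N ≤ q → Polynomial.aeval ((q:ℂ))⁻¹ Qp * f ((q:ℂ))⁻¹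
      - Polynomial.aeval ((q:ℂ))⁻¹ Pp = 0 := by
    intro q hq
    have hq1 : 1 ≤ q := le_trans (le_trans (le_max_right _ _) (le_max_right _ _)) hq
    have hq0 : 0 < q := hq1
    have hqq₀ : q₀ ≤ q := le_trans (le_trans (le_max_left _ _) (le_max_right _ _)) hq
    have hqN₁ : N₁ ≤ q := le_trans (le_trans (le_max_left _ _) (le_max_left _ _)) hq
    have hqN₂ : N₂ ≤ q := le_trans (le_trans (le_max_right _ _) (le_max_left _ _)) hq
    have hqR0 : (0:ℝ) < (q:ℝ) := by exact_mod_cast hq0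
    set r : ℚ := ((q:ℚ))⁻¹ with hr
    have hrden : r.den = q := Rat.inv_natCast_den_of_pos hq0
    set x : ℂ := ((q:ℂ))⁻¹ with hxdef
    have hx : ((r:ℚ):ℂ) = x := by rw [hr, hxdef]; push_cast; ring
    have hxnorm : ‖x‖ = ((q:ℝ))⁻¹ := by
      rw [hxdef, norm_inv]
      norm_num
    have hxlt : ‖x‖ < ε := by
      rw [hxnorm]
      have h1 : 1/ε < (q:ℝ) := lt_of_lt_of_le hN₁ (by exact_mod_cast hqN₁)
      have h2 : 1/(q:ℝ) < 1/(1/ε) := one_div_lt_one_div_of_lt (by positivity) h1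
      rw [one_div_one_div] at h2
      rwa [inv_eq_one_div]
    have hdist : dist x 0 < ε := by rwa [dist_zero_right]
    have hmem : ((r:ℚ):ℂ) ∈ Ω := by rw [hx]; exact (hballs x hdist).1
    obtain ⟨s, hs⟩ := hratval r hmem
    have hsden : (s.den : ℝ) ≤ C * (q:ℝ)^t := by
      have := hdenb r hmem (hrden ▸ hqq₀) s hs
      rwa [hrden] at this
    -- rational value v
    obtain ⟨nQ, hnQ⟩ := int_mul_eval t Qp hQnat D hQD q hq0
    obtain ⟨nP, hnP⟩ := int_mul_eval t Pp hPnat D hPD q hq0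
    set v : ℚ := Qp.eval r * s - Pp.eval r with hv
    have e1 : (s.den : ℚ) * s = (s.num : ℚ) := by
      rw [mul_comm]; exact_mod_cast Rat.mul_den_eq_num s
    have hm0 : D * q^t * s.den ≠ 0 := by positivity
    have hmint : ((D * q^t * s.den : ℕ) : ℚ) * v = ((nQ * s.num - nP * s.den : ℤ) : ℚ) := by
      push_cast
      rw [hv, hr]
      linear_combination (s.num : ℚ) * hnQ - (s.den : ℚ) * hnP
        + ((D:ℚ) * (q:ℚ)^t * Qp.eval ((q:ℚ))⁻¹) * e1
    have hvden : v.den ≤ D * q^t * s.den :=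
      Nat.le_of_dvd (Nat.pos_of_ne_zero hm0) (Int.ofNat_dvd.mp (den_dvd_aux hm0 hmint))
    -- identify g x with v
    have heval : ∀ S : ℚ[X], Polynomial.aeval ((r:ℚ):ℂ) S = ((S.eval r : ℚ):ℂ) := by
      intro S
      have h := Polynomial.aeval_algebraMap_apply ℂ r S
      simpa [eq_ratCast] using h
    have hgv : Polynomial.aeval x Qp * f x - Polynomial.aeval x Pp = (v : ℂ) := by
      rw [← hx, heval Qp, heval Pp, hs, hv]
      push_cast
      ring
    -- v must vanish
    by_cases hvz : v = 0
    · rw [hgv, hvz]; simp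
    · exfalso
      -- lower bound on |v|
      have hden0 : (0:ℚ) < (v.den : ℚ) := by exact_mod_cast v.pos
      have hnum1 : (1:ℚ) ≤ |(v.num : ℚ)| := by
        exact_mod_cast Int.one_le_abs (Rat.num_ne_zero.mpr hvz)
      have habs : |v| * (v.den : ℚ) = |(v.num : ℚ)| := by
        rw [← abs_of_pos hden0, ← abs_mul]
        exact_mod_cast congrArg abs (Rat.mul_den_eq_num v)
      have hvlb : ((v.den : ℚ))⁻¹ ≤ |v| := by
        have h3 : (1:ℚ) ≤ |v| * v.den := habs ▸ hnum1
        have h4 := mul_le_mul_of_nonneg_right h3 (inv_nonneg.mpr hden0.le)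
        simpa [mul_assoc, mul_inv_cancel₀ hden0.ne'] using h4
      -- norms
      have hnorm : ‖Polynomial.aeval x Qp * f x - Polynomial.aeval x Pp‖ = ((|v| : ℚ) : ℝ) := by
        rw [hgv]
        rw [show ((v:ℚ):ℂ) = (((v:ℚ):ℝ):ℂ) by push_cast; ring]
        rw [Complex.norm_real]
        rw [Real.norm_eq_abs]
        push_cast
        rfl
      have hub := (hballs x hdist).2
      rw [hnorm, hxnorm] at hub
      have hlb : ((D * q^t * s.den : ℕ):ℝ)⁻¹ ≤ ((|v| : ℚ) : ℝ) := by
        have h5 : ((v.den : ℝ))⁻¹ ≤ ((|v| : ℚ) : ℝ) := by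
          have h6 := (Rat.cast_le (K := ℝ)).mpr hvlb
          push_cast at h6 ⊢
          exact h6
        refine le_trans ?_ h5
        apply inv_anti₀
        · exact_mod_cast v.pos
        · exact_mod_cast hvden
      have hchain : ((D * q^t * s.den : ℕ):ℝ)⁻¹ ≤ M * ((q:ℝ)⁻¹)^(2*t+1) := le_trans hlb hub
      -- convert to the contradiction q ≤ M * D * C
      have hmR : ((D * q^t * s.den : ℕ):ℝ) ≤ (D:ℝ) * C * (q:ℝ)^(2*t) := by
        push_cast
        calc (D:ℝ) * (q:ℝ)^t * (s.den : ℝ) ≤ (D:ℝ) * (q:ℝ)^t * (C * (q:ℝ)^t) := by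
              apply mul_le_mul_of_nonneg_left hsden
              positivity
          _ = (D:ℝ) * C * (q:ℝ)^(2*t) := by rw [two_mul, pow_add]; ring
      have hKq : (0:ℝ) < (D:ℝ) * C * (q:ℝ)^(2*t) := by positivity
      have hchain2 : ((D:ℝ) * C * (q:ℝ)^(2*t))⁻¹ ≤ M * ((q:ℝ)⁻¹)^(2*t+1) := by
        refine le_trans ?_ hchain
        apply inv_anti₀
        · exact_mod_cast Nat.pos_of_ne_zero hm0
        · exact hmR
      have hfinal : (q:ℝ) ≤ M * ((D:ℝ) * C) := by
        have hqpow : (0:ℝ) < (q:ℝ)^(2*t+1) := by positivity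
        have h7 := mul_le_mul_of_nonneg_right hchain2 hqpow.le
        have h8 : ((D:ℝ) * C * (q:ℝ)^(2*t))⁻¹ * (q:ℝ)^(2*t+1) = (q:ℝ) / ((D:ℝ) * C) := by
          rw [pow_succ]
          field_simp
        have h9 : (M * ((q:ℝ)⁻¹)^(2*t+1)) * (q:ℝ)^(2*t+1) = M := by
          rw [inv_pow]
          field_simp
        rw [h8, h9] at h7
        have hDC : (0:ℝ) < (D:ℝ) * C := by positivity
        rw [div_le_iff₀ hDC] at h7
        linarith [h7]
      have hqbig : M * ((D:ℝ) * C) < (q:ℝ) :=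
        lt_of_lt_of_le hN₂ (by exact_mod_cast hqN₂)
      linarith
  -- deduce eventual vanishing via isolated zeros
  have hgan : AnalyticAt ℂ (fun z : ℂ => Polynomial.aeval z Qp * f z - Polynomial.aeval z Pp) 0 :=
    (((analyticAt_id (𝕜 := ℂ) (z := (0:ℂ))).aeval_polynomial Qp).mul hfa).sub
      ((analyticAt_id (𝕜 := ℂ) (z := (0:ℂ))).aeval_polynomial Pp)
  have hseq : Tendsto (fun q : ℕ => ((q:ℂ))⁻¹) atTop (nhdsWithin 0 {(0:ℂ)}ᶜ) := by
    apply tendsto_nhdsWithin_of_tendsto_nhds_of_eventually_within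
    · have h1 : Tendsto (fun q : ℕ => ((q:ℝ))⁻¹) atTop (nhds 0) :=
        tendsto_inv_atTop_nhds_zero_nat
      have h2 := (Complex.continuous_ofReal.tendsto 0).comp h1
      refine h2.congr fun q => ?_
      simp [Function.comp, Complex.ofReal_inv]
    · filter_upwards [eventually_ge_atTop 1] with q hq
      have : ((q:ℂ)) ≠ 0 := Nat.cast_ne_zero.mpr (by omega)
      simp [this]
  have hev0 : ∀ᶠ z in nhds (0:ℂ),
      Polynomial.aeval z Qp * f z - Polynomial.aeval z Pp = 0 := by
    rcases hgan.eventually_eq_zero_or_eventually_ne_zero with h | h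
    · exact h
    · exfalso
      have h2 := hseq.eventually h
      obtain ⟨q, hq1, hq2⟩ := (h2.and (eventually_ge_atTop N)).exists
      exact hq1 (hzero q hq2)
  have hev : ∀ᶠ z in nhds (0:ℂ), Polynomial.aeval z Qp * f z = Polynomial.aeval z Pp := by
    filter_upwards [hev0] with z hz
    exact sub_eq_zero.mp hz
  exact descent f hfa t Qp.natDegree Pp Qp le_rfl hQpne hPdeg hQdeg hev
end

section
/- Let $t$ be a positive integer, let $\Omega \subseteq \mathbb{C}$ be an open neighborhood of the origin, and let $f$ be analytic on $\Omega$ with $f(0) = 0$ and Taylor coefficients $a_k$ at $0$ satisfying $a_k \in \mathbb{Q}$ for all $0 \le k \le 2t$. Suppose $f(\mathbb{Q} \cap \Omega) \subseteq \mathbb{Q}$ and there exist a constant $C > 0$ and an integer $q_0$ such that $\operatorname{den} f(p/q) \le C\, q^{t}$ for all rational numbers $p/q \in \Omega$ in lowest terms with $q \ge q_0$. Then there exist polynomials $P, Q \in \mathbb{Q}[z]$ with $\deg P \le t$, $\deg Q \le t$, $Q \ne 0$, and a positive integer $M_1$ such that for every integer $M \ge M_1$ one has $Q(1/M) \ne 0$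 and $f(1/M) = P(1/M)/Q(1/M)$. -/
set_option maxHeartbeats 1600000

open Polynomial Filter Asymptotics Finset

/-- An integer multiple of a rational clearing its denominator is an integer. -/
lemma aux_den_dvd_int {x : ℚ} {n : ℕ} (h : x.den ∣ n) : ∃ m : ℤ, (m : ℚ) = n * x := by
  obtain ⟨c, hc⟩ := h
  refine ⟨x.num * c, ?_⟩
  have hden : (x.den : ℚ) ≠ 0 := Nat.cast_ne_zero.mpr x.den_nz
  have h2 : (x.den : ℚ) * x = x.num := by
    rw [mul_comm]
    exact Rat.mul_den_eq_num x
  subst hc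
  push_cast
  linear_combination (-(c : ℚ)) * h2

lemma aux_int_sum {ι : Type*} {s : Finset ι} {g : ι → ℚ}
    (h : ∀ i ∈ s, ∃ m : ℤ, (m : ℚ) = g i) : ∃ m : ℤ, (m : ℚ) = ∑ i ∈ s, g i := by
  classical
  induction s using Finset.induction with
  | empty => exact ⟨0, by simp⟩
  | insert _ _ hx ih =>
    obtain ⟨m, hm⟩ := h _ (Finset.mem_insert_self _ _)
    obtain ⟨m', hm'⟩ := ih fun i hi => h i (Finset.mem_insert_of_mem hi)
    exact ⟨m + m', by push_cast [Finset.sum_insert hx, hm, hm']; ring⟩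

/-- For a polynomial with integer coefficients and degree ≤ t, `M^t * R(1/M)` is an integer. -/
lemma aux_int_eval (R : Polynomial ℚ) (t : ℕ) (hdeg : R.natDegree ≤ t)
    (hint : ∀ n, ∃ m : ℤ, (m : ℚ) = R.coeff n) (M : ℕ) (hM : M ≠ 0) :
    ∃ m : ℤ, (m : ℚ) = (M : ℚ) ^ t * R.eval ((M : ℚ)⁻¹) := by
  have hM0 : (M : ℚ) ≠ 0 := Nat.cast_ne_zero.mpr hM
  rw [Polynomial.eval_eq_sum_range' (Nat.lt_succ_of_le hdeg), Finset.mul_sum]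
  refine aux_int_sum fun i hi => ?_
  obtain ⟨m, hm⟩ := hint i
  refine ⟨m * (M : ℤ) ^ (t - i), ?_⟩
  have hit : i ≤ t := Nat.lt_succ_iff.mp (Finset.mem_range.mp hi)
  have hpow : (M : ℚ) ^ (t - i) = (M : ℚ) ^ t * ((M : ℚ) ^ i)⁻¹ := pow_sub₀ _ hM0 hit
  push_cast
  rw [hpow, hm, inv_pow]
  ring

/-- Let `t` be a positive integer, `Ω ⊆ ℂ` an open neighborhood of the origin,
and `f` analytic on `Ω` with `f(0) = 0` and Taylor coefficients `aₖ = f⁽ᵏ⁾(0)/k!` rational for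
all `0 ≤ k ≤ 2t`. Suppose `f(ℚ ∩ Ω) ⊆ ℚ` and there are `C > 0` and an integer `q₀` with
`den f(p/q) ≤ C * q^t` for all rationals `p/q ∈ Ω` in lowest terms with `q ≥ q₀`. Then there
exist `P, Q ∈ ℚ[z]` of degree at most `t` with `Q ≠ 0`, and a positive integer `M₁`, such that
for every integer `M ≥ M₁` one has `Q(1/M) ≠ 0` and `f(1/M) = P(1/M)/Q(1/M)`. -/
theorem agrees_with_rational_function_at_reciprocals
    (t : ℕ) (ht : 0 < t) (Ω : Set ℂ) (hΩ : IsOpen Ω) (h0 : (0 : ℂ) ∈ Ω)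
    (f : ℂ → ℂ) (hf : AnalyticOnNhd ℂ f Ω) (hf0 : f 0 = 0)
    (hcoeff : ∀ k : ℕ, k ≤ 2 * t → ∃ a : ℚ, iteratedDeriv k f 0 = (a : ℂ) * (Nat.factorial k))
    (hratval : ∀ r : ℚ, (r : ℂ) ∈ Ω → ∃ s : ℚ, f (r : ℂ) = (s : ℂ))
    (hden : ∃ C : ℝ, 0 < C ∧ ∃ q₀ : ℕ, ∀ r : ℚ, (r : ℂ) ∈ Ω → q₀ ≤ r.den →
      ∀ s : ℚ, f (r : ℂ) = (s : ℂ) → (s.den : ℝ) ≤ C * (r.den : ℝ) ^ t) :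
    ∃ P Q : Polynomial ℚ, P.degree ≤ (t : ℕ) ∧ Q.degree ≤ (t : ℕ) ∧ Q ≠ 0 ∧
      ∃ M₁ : ℕ, 0 < M₁ ∧ ∀ M : ℕ, M₁ ≤ M →
        Polynomial.aeval ((1 : ℂ) / M) Q ≠ 0 ∧
        f ((1 : ℂ) / M) =
          Polynomial.aeval ((1 : ℂ) / M) P / Polynomial.aeval ((1 : ℂ) / M) Q := by
  classical
  obtain ⟨C₀, hC, q₀, hq⟩ := hden
  -- Taylor coefficients as rationals
  set a : ℕ → ℚ := fun k => if h : k ≤ 2 * t then (hcoeff k h).choose else 0 with ha_def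
  have ha : ∀ k, k ≤ 2 * t → iteratedDeriv k f 0 = (a k : ℂ) * (Nat.factorial k) := by
    intro k hk
    simp only [ha_def, dif_pos hk]
    exact (hcoeff k hk).choose_spec
  -- power series of f at 0
  obtain ⟨p, hp⟩ := hf 0 h0
  have hcoeffp : ∀ k, k ≤ 2 * t → p.coeff k = (a k : ℂ) := by
    intro k hk
    obtain ⟨r, hpr⟩ := hp
    have h1 := hpr.factorial_smul (1 : ℂ) k
    rw [← iteratedDeriv_eq_iteratedFDeriv] at h1
    have h2 : (k.factorial : ℂ) * p.coeff k = (a k : ℂ) * k.factorial := by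
      rw [← ha k hk, ← h1]
      simp [FormalMultilinearSeries.apply_eq_pow_smul_coeff, nsmul_eq_mul]
    have h3 : (k.factorial : ℂ) ≠ 0 := Nat.cast_ne_zero.mpr k.factorial_ne_zero
    have := mul_left_cancel₀ h3 (h2.trans (by ring))
    exact this
  -- a nonzero kernel vector for the Hankel-type system
  have hL : ¬ Function.Injective
      ((Matrix.of fun (i : Fin t) (j : Fin (t + 1)) => a (t + 1 + i - j)).mulVecLin) := by
    intro hinj
    have h1 := LinearMap.finrank_le_finrank_of_injective hinj
    simp only [Module.finrank_fin_fun] at h1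
    omega
  obtain ⟨x, y, hxy, hne⟩ := Function.not_injective_iff.mp hL
  set b₀ : Fin (t + 1) → ℚ := x - y with hb₀
  have hb₀ne : b₀ ≠ 0 := sub_ne_zero.mpr hne
  have hker : ∀ k, t + 1 ≤ k → k ≤ 2 * t → ∑ j : Fin (t + 1), a (k - j) * b₀ j = 0 := by
    intro k h1 h2
    have hi : k - (t + 1) < t := by omega
    have h3 : (Matrix.of fun (i : Fin t) (j : Fin (t + 1)) =>
        a (t + 1 + i - j)).mulVecLin b₀ = 0 := by
      rw [hb₀, map_sub, hxy, sub_self]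
    have h4 := congrFun h3 ⟨k - (t + 1), hi⟩
    have h5 : t + 1 + (k - (t + 1)) = k := by omega
    simpa [Matrix.mulVecLin_apply, Matrix.mulVec, dotProduct, h5] using h4
  -- denominators
  set d1 : ℕ := ∏ j, (b₀ j).den with hd1
  set d2 : ℕ := ∏ k ∈ Finset.range (2 * t + 1), (a k).den with hd2
  have hd1pos : 0 < d1 := Finset.prod_pos fun j _ => (b₀ j).pos
  have hd2pos : 0 < d2 := Finset.prod_pos fun k _ => (a k).pos
  have hbint : ∀ j : Fin (t + 1), ∃ m : ℤ, (m : ℚ) = d1 * b₀ j := fun j =>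
    aux_den_dvd_int (Finset.dvd_prod_of_mem _ (Finset.mem_univ j))
  have haint : ∀ k, k ≤ 2 * t → ∃ m : ℤ, (m : ℚ) = d2 * a k := fun k hk =>
    aux_den_dvd_int (Finset.dvd_prod_of_mem _ (Finset.mem_range.mpr (by omega)))
  -- the polynomials
  set bb : ℕ → ℚ := fun j => if h : j < t + 1 then d1 * b₀ ⟨j, h⟩ * d2 else 0 with hbb
  set Q : Polynomial ℚ := ∑ j ∈ Finset.range (t + 1), Polynomial.C (bb j) * X ^ j with hQdef
  set S : Polynomial ℚ := ∑ k ∈ Finset.range (2 * t + 1), Polynomial.C (a k) * X ^ k with hSdef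
  set P : Polynomial ℚ := ∑ k ∈ Finset.range (t + 1), Polynomial.C ((Q * S).coeff k) * X ^ k with hPdef
  have hQc : ∀ n, Q.coeff n = bb n := by
    intro n
    rw [hQdef]
    simp only [Polynomial.finset_sum_coeff, C_mul_X_pow_eq_monomial, Polynomial.coeff_monomial]
    rw [Finset.sum_ite_eq']
    by_cases h : n < t + 1
    · simp [Finset.mem_range, h]
    · simp only [Finset.mem_range, h, if_false, hbb, dif_neg h]
  have hSc : ∀ n, S.coeff n = a n := by
    intro n
    rw [hSdef]
    simp only [Polynomial.finset_sum_coeff, C_mul_X_pow_eq_monomial, Polynomial.coeff_monomial]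
    rw [Finset.sum_ite_eq']
    by_cases h : n < 2 * t + 1
    · simp [Finset.mem_range, h]
    · simp only [Finset.mem_range, h, if_false, ha_def, dif_neg (by omega : ¬ n ≤ 2 * t)]
  have hPc : ∀ n, P.coeff n = if n < t + 1 then (Q * S).coeff n else 0 := by
    intro n
    rw [hPdef]
    simp only [Polynomial.finset_sum_coeff, C_mul_X_pow_eq_monomial, Polynomial.coeff_monomial]
    rw [Finset.sum_ite_eq']
    simp [Finset.mem_range]
  -- middle coefficients of Q * S vanish
  have hmid : ∀ k, t + 1 ≤ k → k ≤ 2 * t → (Q * S).coeff k = 0 := by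
    intro k h1 h2
    rw [Polynomial.coeff_mul, Finset.Nat.sum_antidiagonal_eq_sum_range_succ_mk]
    have hsub : Finset.range (t + 1) ⊆ Finset.range (k + 1) := Finset.range_subset_range.mpr (by omega)
    rw [← Finset.sum_subset hsub (fun i _ hi => by
      rw [hQc]
      have : ¬ i < t + 1 := fun h => hi (Finset.mem_range.mpr h)
      simp [hbb, dif_neg this]; exact fun h' => absurd h' (by omega))]
    calc ∑ i ∈ Finset.range (t + 1), Q.coeff i * S.coeff (k - i)
        = ∑ j : Fin (t + 1), (d1 * b₀ j * d2 : ℚ) * a (k - j) := by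
          rw [Finset.sum_range fun i => Q.coeff i * S.coeff (k - i)]
          refine Finset.sum_congr rfl fun j _ => ?_
          rw [hQc, hSc]
          simp [hbb, j.isLt]; exact fun h' => absurd h' (by have := j.isLt; omega)
      _ = (d1 * d2 : ℚ) * ∑ j : Fin (t + 1), a (k - j) * b₀ j := by
          rw [Finset.mul_sum]
          refine Finset.sum_congr rfl fun j _ => by ring
      _ = 0 := by rw [hker k h1 h2, mul_zero]
  have hvanish : ∀ k, k ≤ 2 * t → (Q * S - P).coeff k = 0 := by
    intro k hk
    rw [Polynomial.coeff_sub, hPc]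
    by_cases h : k < t + 1
    · simp [h]
    · rw [if_neg h, hmid k (by omega) hk, sub_zero]
  obtain ⟨W, hW⟩ : X ^ (2 * t + 1) ∣ (Q * S - P) :=
    Polynomial.X_pow_dvd_iff.mpr fun d hd => hvanish d (by omega)
  -- degrees
  have hQdeg : Q.degree ≤ (t : ℕ) := by
    rw [hQdef]
    refine (Polynomial.degree_sum_le _ _).trans (Finset.sup_le fun i hi => ?_)
    exact (Polynomial.degree_C_mul_X_pow_le _ _).trans
      (by exact_mod_cast Nat.cast_le.mpr (Nat.lt_succ_iff.mp (Finset.mem_range.mp hi)))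
  have hPdeg : P.degree ≤ (t : ℕ) := by
    rw [hPdef]
    refine (Polynomial.degree_sum_le _ _).trans (Finset.sup_le fun i hi => ?_)
    exact (Polynomial.degree_C_mul_X_pow_le _ _).trans
      (by exact_mod_cast Nat.cast_le.mpr (Nat.lt_succ_iff.mp (Finset.mem_range.mp hi)))
  have hQnat : Q.natDegree ≤ t := Polynomial.natDegree_le_iff_degree_le.mpr hQdeg
  have hPnat : P.natDegree ≤ t := Polynomial.natDegree_le_iff_degree_le.mpr hPdeg
  -- Q is nonzero
  have hQne0 : Q ≠ 0 := by
    obtain ⟨j, hj⟩ := Function.ne_iff.mp hb₀ne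
    intro hQ0
    have h1 : Q.coeff j = 0 := by rw [hQ0]; simp
    rw [hQc] at h1
    simp only [hbb, dif_pos j.isLt, Fin.eta] at h1
    rcases mul_eq_zero.mp h1 with h2 | h2
    · rcases mul_eq_zero.mp h2 with h3 | h3
      · exact absurd h3 (Nat.cast_ne_zero.mpr hd1pos.ne')
      · exact hj (by simpa using h3)
    · exact absurd h2 (Nat.cast_ne_zero.mpr hd2pos.ne')
  -- integrality of the coefficients
  have hQint : ∀ n, ∃ m : ℤ, (m : ℚ) = Q.coeff n := by
    intro n
    rw [hQc]
    by_cases h : n < t + 1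
    · obtain ⟨m, hm⟩ := hbint ⟨n, h⟩
      refine ⟨m * d2, ?_⟩
      simp only [hbb, dif_pos h]
      push_cast
      rw [hm]
    · exact ⟨0, by simp [hbb, dif_neg h]; exact fun h' => absurd h' (by omega)⟩
  have hPint : ∀ n, ∃ m : ℤ, (m : ℚ) = P.coeff n := by
    intro n
    rw [hPc]
    by_cases h : n < t + 1
    · rw [if_pos h, Polynomial.coeff_mul, Finset.Nat.sum_antidiagonal_eq_sum_range_succ_mk]
      refine aux_int_sum fun i hi => ?_
      by_cases h2 : i < t + 1
      · obtain ⟨mb, hmb⟩ := hbint ⟨i, h2⟩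
        obtain ⟨ma, hma⟩ := haint (n - i) (by omega)
        refine ⟨mb * ma, ?_⟩
        rw [hQc, hSc]
        simp only [hbb, dif_pos h2]
        push_cast
        rw [hmb, hma]
        ring
      · exact ⟨0, by rw [hQc]; simp [hbb, dif_neg h2]; exact fun h' => absurd h' (by omega)⟩
    · exact ⟨0, by rw [if_neg h]; simp⟩
  -- the Taylor polynomial S evaluates to the partial sum
  have hSeval : ∀ yc : ℂ, (Polynomial.aeval yc S : ℂ) = p.partialSum (2 * t + 1) yc := by
    intro yc
    simp only [FormalMultilinearSeries.partialSum]
    rw [hSdef, map_sum]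
    refine Finset.sum_congr rfl fun k hk => ?_
    rw [map_mul, map_pow, Polynomial.aeval_X, Polynomial.aeval_C,
      FormalMultilinearSeries.apply_eq_pow_smul_coeff,
      hcoeffp k (by have := Finset.mem_range.mp hk; omega)]
    · rw [smul_eq_mul, eq_ratCast]
      ring
  -- big-O estimates
  have hf_tail : (fun yc : ℂ => f yc - Polynomial.aeval yc S) =O[nhds 0]
      fun yc => ‖yc‖ ^ (2 * t + 1) := by
    have h1 := hp.isBigO_sub_partialSum_pow (2 * t + 1)
    have h2 : (fun yc : ℂ => f yc - Polynomial.aeval yc S)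
        = fun yc => f (0 + yc) - p.partialSum (2 * t + 1) yc := by
      funext yc; rw [zero_add, hSeval]
    rw [h2]
    exact h1
  have hpoly_bigO : ∀ R : Polynomial ℚ,
      (fun yc : ℂ => (Polynomial.aeval yc R : ℂ)) =O[nhds (0 : ℂ)] fun _ => (1 : ℝ) := by
    intro R
    have hcont : Continuous fun yc : ℂ => (Polynomial.aeval yc R : ℂ) := by
      have : (fun yc : ℂ => (Polynomial.aeval yc R : ℂ))
          = fun yc => (R.map (algebraMap ℚ ℂ)).eval yc := by
        funext yc
        rw [Polynomial.eval_map, Polynomial.aeval_def]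
      rw [this]
      exact (R.map (algebraMap ℚ ℂ)).continuous
    exact (hcont.tendsto 0).isBigO_one ℝ
  have hgO : (fun yc : ℂ => Polynomial.aeval yc Q * f yc - Polynomial.aeval yc P) =O[nhds 0]
      fun yc => ‖yc‖ ^ (2 * t + 1) := by
    have h1 : (fun yc : ℂ => Polynomial.aeval yc Q * (f yc - Polynomial.aeval yc S))
        =O[nhds 0] fun yc => ‖yc‖ ^ (2 * t + 1) := by
      have := (hpoly_bigO Q).mul hf_tail
      simpa using this
    have h4 : (fun yc : ℂ => yc ^ (2 * t + 1)) =O[nhds (0 : ℂ)]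
        fun yc => ‖yc‖ ^ (2 * t + 1) := by
      apply Asymptotics.isBigO_of_le
      intro yc
      rw [norm_pow]
      exact le_abs_self _
    have h2 : (fun yc : ℂ => (Polynomial.aeval yc (Q * S - P) : ℂ)) =O[nhds 0]
        fun yc => ‖yc‖ ^ (2 * t + 1) := by
      have h3 : (fun yc : ℂ => (Polynomial.aeval yc (Q * S - P) : ℂ))
          = fun yc : ℂ => yc ^ (2 * t + 1) * Polynomial.aeval yc W := by
        funext yc
        rw [hW, map_mul, map_pow, Polynomial.aeval_X]
      rw [h3]
      simpa using h4.mul (hpoly_bigO W)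
    have h5 : (fun yc : ℂ => Polynomial.aeval yc Q * f yc - Polynomial.aeval yc P)
        = fun yc => Polynomial.aeval yc Q * (f yc - Polynomial.aeval yc S)
          + Polynomial.aeval yc (Q * S - P) := by
      funext yc
      rw [map_sub, map_mul]
      ring
    rw [h5]
    exact h1.add h2
  obtain ⟨c, hc0, hcb⟩ := hgO.exists_pos
  rw [Asymptotics.isBigOWith_iff] at hcb
  have htend : Tendsto (fun M : ℕ => ((M : ℂ))⁻¹) atTop (nhds 0) := by
    have h1 : Tendsto (fun M : ℕ => ((M : ℝ))⁻¹) atTop (nhds 0) :=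
      tendsto_inv_atTop_zero.comp tendsto_natCast_atTop_atTop
    have h2 := (Complex.continuous_ofReal.tendsto 0).comp h1
    have h3 : (fun M : ℕ => ((M : ℂ))⁻¹)
        = (fun x : ℝ => (x : ℂ)) ∘ fun M : ℕ => ((M : ℝ))⁻¹ := by
      funext M
      simp [Function.comp]
    rw [h3]
    simpa using h2
  have hev : ∀ᶠ M : ℕ in atTop,
      Polynomial.aeval ((1 : ℂ) / M) Q ≠ 0 ∧
      f ((1 : ℂ) / M) =
        Polynomial.aeval ((1 : ℂ) / M) P / Polynomial.aeval ((1 : ℂ) / M) Q := by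
    have E1 : ∀ᶠ M : ℕ in atTop, ((M : ℂ))⁻¹ ∈ Ω := htend.eventually_mem (hΩ.mem_nhds h0)
    have E2 := htend.eventually hcb
    have E3 : ∀ᶠ M : ℕ in atTop, max q₀ 1 ≤ M := eventually_ge_atTop _
    have E4 : ∀ᶠ M : ℕ in atTop, C₀ * c * ((M : ℝ))⁻¹ < 1 := by
      have h1 : Tendsto (fun M : ℕ => C₀ * c * ((M : ℝ))⁻¹) atTop (nhds (C₀ * c * 0)) :=
        ((tendsto_inv_atTop_zero.comp tendsto_natCast_atTop_atTop).const_mul _)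
      exact h1.eventually_lt_const (by norm_num)
    have E5 : ∀ᶠ M : ℕ in atTop, Polynomial.aeval ((M : ℂ))⁻¹ Q ≠ 0 := by
      have hmapne : Q.map (algebraMap ℚ ℂ) ≠ 0 := Polynomial.map_ne_zero hQne0
      have hfin : Set.Finite {yc : ℂ | (Q.map (algebraMap ℚ ℂ)).IsRoot yc} :=
        Polynomial.finite_setOf_isRoot hmapne
      have hinj : Function.Injective fun M : ℕ => ((M : ℂ))⁻¹ := by
        intro m n h
        have := inv_injective h
        exact_mod_cast this
      have hfin2 : Set.Finite {M : ℕ | Polynomial.aeval ((M : ℂ))⁻¹ Q = 0} := by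
        refine Set.Finite.subset (hfin.preimage hinj.injOn) ?_
        intro M hM
        simp only [Set.mem_preimage, Set.mem_setOf_eq, Polynomial.IsRoot, Polynomial.eval_map]
        rw [← Polynomial.aeval_def]
        exact hM
      have h6 := hfin2.eventually_cofinite_notMem
      rw [Nat.cofinite_eq_atTop] at h6
      exact h6.mono fun M hM => by simpa using hM
    filter_upwards [E1, E2, E3, E4, E5] with M h1 h2 h3 h4 h5
    have hM1 : 1 ≤ M := le_trans (le_max_right _ _) h3
    have hMq : q₀ ≤ M := le_trans (le_max_left _ _) h3
    have hMne : (M : ℚ) ≠ 0 := Nat.cast_ne_zero.mpr (by omega)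
    have hMRne : (M : ℝ) ≠ 0 := Nat.cast_ne_zero.mpr (by omega)
    have hMRpos : (0 : ℝ) < M := by positivity
    have hcast : ((1 : ℂ) / M) = ((M : ℂ))⁻¹ := one_div _
    set r : ℚ := ((M : ℚ))⁻¹ with hr
    have hrden : r.den = M := Rat.inv_natCast_den_of_pos (by omega)
    have hrc : ((r : ℚ) : ℂ) = ((M : ℂ))⁻¹ := by
      rw [hr]
      push_cast
      ring
    obtain ⟨s, hs⟩ := hratval r (by rw [hrc]; exact h1)
    have hsden : (s.den : ℝ) ≤ C₀ * (M : ℝ) ^ t := by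
      have := hq r (by rw [hrc]; exact h1) (by rw [hrden]; exact hMq) s hs
      rwa [hrden] at this
    obtain ⟨nQ, hnQ⟩ := aux_int_eval Q t hQnat hQint M (by omega)
    obtain ⟨nP, hnP⟩ := aux_int_eval P t hPnat hPint M (by omega)
    set gr : ℚ := Q.eval r * s - P.eval r with hgr
    have hsnum : (s.den : ℚ) * s = s.num := by
      rw [mul_comm]
      exact Rat.mul_den_eq_num s
    have hkey : ((nQ * s.num - nP * s.den : ℤ) : ℚ) = (M : ℚ) ^ t * s.den * gr := by
      rw [hgr]
      push_cast
      linear_combination (s.num : ℚ) * hnQ - (s.den : ℚ) * hnP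
        - ((M : ℚ) ^ t * Q.eval r) * hsnum
    -- identify the complex value with the rational value
    have haevalQ : Polynomial.aeval ((M : ℂ))⁻¹ Q = ((Q.eval r : ℚ) : ℂ) := by
      rw [← hrc, show ((r : ℚ) : ℂ) = algebraMap ℚ ℂ r from (eq_ratCast (algebraMap ℚ ℂ) r).symm,
        Polynomial.aeval_algebraMap_apply_eq_algebraMap_eval, eq_ratCast]
    have haevalP : Polynomial.aeval ((M : ℂ))⁻¹ P = ((P.eval r : ℚ) : ℂ) := by
      rw [← hrc, show ((r : ℚ) : ℂ) = algebraMap ℚ ℂ r from (eq_ratCast (algebraMap ℚ ℂ) r).symm,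
        Polynomial.aeval_algebraMap_apply_eq_algebraMap_eval, eq_ratCast]
    have hfM : f ((M : ℂ))⁻¹ = ((s : ℚ) : ℂ) := by rw [← hrc]; exact hs
    have hgc : Polynomial.aeval ((M : ℂ))⁻¹ Q * f ((M : ℂ))⁻¹ - Polynomial.aeval ((M : ℂ))⁻¹ P
        = ((gr : ℚ) : ℂ) := by
      rw [haevalQ, haevalP, hfM, hgr]
      push_cast
      ring
    -- the norm bound
    have hnorm : |(gr : ℝ)| ≤ c * ((M : ℝ)⁻¹) ^ (2 * t + 1) := by
      rw [hgc] at h2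
      rw [Complex.norm_ratCast] at h2
      have hnn : ‖((M : ℂ))⁻¹‖ = (M : ℝ)⁻¹ := by
        rw [norm_inv, Complex.norm_natCast]
      rw [hnn] at h2
      calc |(gr : ℝ)| ≤ c * ‖(M : ℝ)⁻¹ ^ (2 * t + 1)‖ := h2
        _ = c * ((M : ℝ)⁻¹) ^ (2 * t + 1) := by
            rw [Real.norm_eq_abs, abs_of_nonneg (by positivity)]
    have habs : |((nQ * s.num - nP * s.den : ℤ) : ℝ)| < 1 := by
      have h1' : ((nQ * s.num - nP * s.den : ℤ) : ℝ) = (M : ℝ) ^ t * s.den * (gr : ℝ) := by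
        exact_mod_cast congrArg (fun q : ℚ => (q : ℝ)) hkey
      rw [h1', abs_mul]
      have h2' : |(M : ℝ) ^ t * (s.den : ℝ)| = (M : ℝ) ^ t * s.den := by
        rw [abs_of_nonneg (by positivity)]
      rw [h2']
      calc (M : ℝ) ^ t * (s.den : ℝ) * |(gr : ℝ)|
          ≤ (M : ℝ) ^ t * (C₀ * (M : ℝ) ^ t) * (c * ((M : ℝ)⁻¹) ^ (2 * t + 1)) := by
            have hnng : (0:ℝ) ≤ |(gr : ℝ)| := abs_nonneg _
            gcongr
          _ = C₀ * c * (M : ℝ)⁻¹ := by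
            rw [inv_pow]
            field_simp
            ring
          _ < 1 := h4
    have hzero : (nQ * s.num - nP * s.den : ℤ) = 0 := by
      have h7 : |(nQ * s.num - nP * s.den : ℤ)| < 1 := by exact_mod_cast habs
      rcases abs_lt.mp h7 with ⟨hl, hr⟩
      omega
    have hgr0 : gr = 0 := by
      have h8 : (M : ℚ) ^ t * s.den * gr = 0 := by
        rw [← hkey, hzero]
        simp
      have h9 : ((M : ℚ) ^ t * (s.den : ℚ)) ≠ 0 := by
        have : (s.den : ℚ) ≠ 0 := Nat.cast_ne_zero.mpr s.den_nz
        positivity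
      exact (mul_eq_zero.mp h8).resolve_left h9
    have hQvC : Polynomial.aeval ((M : ℂ))⁻¹ Q * f ((M : ℂ))⁻¹
        = Polynomial.aeval ((M : ℂ))⁻¹ P := by
      have := hgc
      rw [hgr0] at this
      simpa [sub_eq_zero] using this
    constructor
    · rw [hcast]; exact h5
    · rw [hcast, eq_div_iff h5, mul_comm]
      exact hQvC
  obtain ⟨M₁, hM₁⟩ := eventually_atTop.mp hev
  refine ⟨P, Q, hPdeg, hQdeg, hQne0, max M₁ 1, lt_of_lt_of_le one_pos (le_max_right _ _), ?_⟩
  exact fun M hM => hM₁ M (le_trans (le_max_left _ _) hM)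
end
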